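/- arXiv:math/0512482 — 7 statements merged into one kernel-verified Lean document; each statement's English description precedes it below -/
import Mathlib

section
/- Let g be a holomorphic function on the open unit disk Δ with Re g(z) ≥ 0 for all z ∈ Δ, and let τ ∈ ∂Δ. If the non-tangential (angular) limit of g(z)/(1 - conj(τ)·z) as z → τ exists and equals 0, then g is identically 0 on Δ. -/
open Complex Metric Filter Set Asymptotics Topology

/-- Stolz angle (non-tangential approach region) at a boundary point `τ`. -/
def StolzAt (τ : ℂ) (M : ℝ) : Set ℂ :=
  {z : ℂ | ‖τ - z‖ < M * (1 - ‖z‖)}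

/-- `f` has angular (non-tangential) limit `L` at `τ`: the limit through every
Stolz angle at `τ` is `L`. -/
def AngularTendsto (f : ℂ → ℂ) (τ L : ℂ) : Prop :=
  ∀ M : ℝ, 1 < M → Tendsto f (𝓝[StolzAt τ M] τ) (𝓝 L)

lemma key_ineq (w a : ℂ) (r : ℝ) (hr0 : 0 ≤ r) (hr1 : r ≤ 1)
    (h : ‖w - a‖ ≤ r * ‖w + (starRingEnd ℂ) a‖) :
    (1 - r^2) * (w.re^2 + a.re^2) ≤ 2 * (1 + r^2) * (a.re * w.re) := by
  have h1 : ‖w - a‖ * ‖w - a‖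
      ≤ (r * ‖w + (starRingEnd ℂ) a‖) * (r * ‖w + (starRingEnd ℂ) a‖) :=
    mul_self_le_mul_self (norm_nonneg _) h
  have h2 : Complex.normSq (w - a) ≤ r^2 * Complex.normSq (w + (starRingEnd ℂ) a) := by
    rw [← Complex.norm_mul_self_eq_normSq, ← Complex.norm_mul_self_eq_normSq]; nlinarith [h1]
  simp only [Complex.normSq_apply, Complex.sub_re, Complex.sub_im, Complex.add_re,
    Complex.add_im, Complex.conj_re, Complex.conj_im] at h2
  have h3 : 0 ≤ (1 - r^2) * (w.im - a.im)^2 :=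
    mul_nonneg (by nlinarith) (sq_nonneg _)
  nlinarith [h2, h3]

lemma harnack_ineq (g : ℂ → ℂ) (hg : DifferentiableOn ℂ g (ball (0:ℂ) 1))
    (hre : ∀ z ∈ ball (0:ℂ) 1, 0 < (g z).re) (z : ℂ) (hz : z ∈ ball (0:ℂ) 1) :
    (1 - (‖z‖)^2) * ((g z).re^2 + (g 0).re^2)
      ≤ 2 * (1 + (‖z‖)^2) * ((g 0).re * (g z).re) := by
  have h0 : (0:ℂ) ∈ ball (0:ℂ) 1 := by simp
  set a := g 0 with ha
  have hdne : ∀ w ∈ ball (0:ℂ) 1, g w + (starRingEnd ℂ) a ≠ 0 := by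
    intro w hw hc
    have h1 : (g w + (starRingEnd ℂ) a).re = 0 := by rw [hc]; simp
    have h2 : (g w).re + a.re = 0 := by
      simpa [Complex.add_re, Complex.conj_re] using h1
    nlinarith [hre w hw, hre 0 h0]
  set f : ℂ → ℂ := fun w => (g w - a) / (g w + (starRingEnd ℂ) a) with hf
  have hfd : DifferentiableOn ℂ f (ball (0:ℂ) 1) :=
    (hg.sub (differentiableOn_const a)).div (hg.add (differentiableOn_const _)) hdne
  have hf0 : f 0 = 0 := by simp [hf, ha]
  have hlt : ∀ w ∈ ball (0:ℂ) 1,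
      ‖g w - a‖ < ‖g w + (starRingEnd ℂ) a‖ := by
    intro w hw
    have hn : Complex.normSq (g w - a) < Complex.normSq (g w + (starRingEnd ℂ) a) := by
      simp only [Complex.normSq_apply, Complex.sub_re, Complex.sub_im, Complex.add_re,
        Complex.add_im, Complex.conj_re, Complex.conj_im]
      nlinarith [hre w hw, hre 0 h0]
    rw [Complex.norm_def, Complex.norm_def]
    exact Real.sqrt_lt_sqrt (Complex.normSq_nonneg _) hn
  have maps : MapsTo f (ball (0:ℂ) 1) (ball (0:ℂ) 1) := by
    intro w hw
    rw [mem_ball_zero_iff, hf]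
    simp only [norm_div]
    rw [div_lt_one ((norm_pos_iff.mpr (hdne w hw)))]
    exact hlt w hw
  have hs := Complex.norm_le_norm_of_mapsTo_ball hfd (maps.mono_right ball_subset_closedBall) hf0 (mem_ball_zero_iff.1 hz)
  have hs' : ‖g z - a‖
      ≤ ‖z‖ * ‖g z + (starRingEnd ℂ) a‖ := by
    have := hs
    rw [hf] at this
    simp only [norm_div] at this
    rwa [div_le_iff₀ (norm_pos_iff.mpr (hdne z hz))] at this
  have hz1 : ‖z‖ ≤ 1 := le_of_lt (mem_ball_zero_iff.1 hz)
  exact key_ineq (g z) a (‖z‖) (norm_nonneg _) hz1 hs'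

/-- ε-perturbed Harnack for nonnegative real part. -/
lemma harnack_eps (g : ℂ → ℂ) (hg : DifferentiableOn ℂ g (ball (0:ℂ) 1))
    (hre : ∀ z ∈ ball (0:ℂ) 1, 0 ≤ (g z).re) (z : ℂ) (hz : z ∈ ball (0:ℂ) 1)
    (ε : ℝ) (hε : 0 < ε) :
    (1 - (‖z‖)^2) * (((g z).re + ε)^2 + ((g 0).re + ε)^2)
      ≤ 2 * (1 + (‖z‖)^2) * (((g 0).re + ε) * ((g z).re + ε)) := by
  set G : ℂ → ℂ := fun w => g w + (ε:ℂ) with hG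
  have hGd : DifferentiableOn ℂ G (ball (0:ℂ) 1) := hg.add (differentiableOn_const _)
  have hGre : ∀ w ∈ ball (0:ℂ) 1, 0 < (G w).re := by
    intro w hw
    simp only [hG, Complex.add_re, Complex.ofReal_re]
    have := hre w hw; linarith
  have := harnack_ineq G hGd hGre z hz
  simpa only [hG, Complex.add_re, Complex.ofReal_re] using this

theorem rigidity_halfplane_angular_zero
    (g : ℂ → ℂ) (τ : ℂ) (hτ : ‖τ‖ = 1)
    (hg : DifferentiableOn ℂ g (ball (0:ℂ) 1))
    (hre : ∀ z ∈ ball (0:ℂ) 1, 0 ≤ (g z).re)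
    (hlim : AngularTendsto (fun z => g z / (1 - (starRingEnd ℂ) τ * z)) τ 0) :
    ∀ z ∈ ball (0:ℂ) 1, g z = 0 := by
  have h0mem : (0:ℂ) ∈ ball (0:ℂ) 1 := by simp
  have hτ1 : (starRingEnd ℂ) τ * τ = 1 := by
    rw [mul_comm, Complex.mul_conj, Complex.normSq_eq_norm_sq, hτ]; norm_num
  -- radial points are in the Stolz angle
  have habsr : ∀ r : ℝ, r ∈ Ioo (0:ℝ) 1 → ‖(r:ℂ) * τ‖ = r := by
    intro r hr
    rw [norm_mul, Complex.norm_real, Real.norm_eq_abs, hτ, mul_one, abs_of_pos hr.1]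
  have hmem : ∀ r : ℝ, r ∈ Ioo (0:ℝ) 1 → (r:ℂ) * τ ∈ StolzAt τ 2 := by
    intro r hr
    have h1 : τ - (r:ℂ) * τ = ((1 - r : ℝ) : ℂ) * τ := by push_cast; ring
    have h2 : ‖τ - (r:ℂ) * τ‖ = 1 - r := by
      rw [h1, norm_mul, Complex.norm_real, Real.norm_eq_abs, hτ, mul_one, abs_of_pos (by linarith [hr.2])]
    simp only [StolzAt, Set.mem_setOf_eq, h2, habsr r hr]
    linarith [hr.2]
  -- the map r ↦ rτ tends to τ within the Stolz angle
  have hm : Tendsto (fun r : ℝ => (r:ℂ) * τ) (𝓝[<] (1:ℝ)) (𝓝[StolzAt τ 2] τ) := by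
    apply tendsto_nhdsWithin_of_tendsto_nhds_of_eventually_within
    · have hc : Continuous (fun r : ℝ => (r:ℂ) * τ) :=
        Complex.continuous_ofReal.mul continuous_const
      have := hc.tendsto 1
      simp only [Complex.ofReal_one, one_mul] at this
      exact this.mono_left nhdsWithin_le_nhds
    · filter_upwards [Ioo_mem_nhdsLT_of_mem (by constructor <;> norm_num :
        (1:ℝ) ∈ Ioc (0:ℝ) 1)] with r hr
      exact hmem r hr
  -- radial limit
  have hrad : Tendsto (fun r : ℝ => g ((r:ℂ) * τ) / (1 - (r:ℂ))) (𝓝[<] (1:ℝ)) (𝓝 0) := by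
    have := (hlim 2 one_lt_two).comp hm
    have heq : (fun r : ℝ => (fun z => g z / (1 - (starRingEnd ℂ) τ * z)) ((r:ℂ) * τ))
        = fun r : ℝ => g ((r:ℂ) * τ) / (1 - (r:ℂ)) := by
      funext r
      have : (starRingEnd ℂ) τ * ((r:ℂ) * τ) = (r:ℂ) := by
        rw [mul_comm (r:ℂ) τ, ← mul_assoc, hτ1, one_mul]
      simp only [this]
    rwa [show ((fun z => g z / (1 - (starRingEnd ℂ) τ * z)) ∘ fun r : ℝ => (r:ℂ) * τ)
        = fun r : ℝ => g ((r:ℂ) * τ) / (1 - (r:ℂ)) from heq] at this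
  -- real part of radial limit
  have hreRad : Tendsto (fun r : ℝ => (g ((r:ℂ) * τ)).re / (1 - r)) (𝓝[<] (1:ℝ)) (𝓝 0) := by
    have := (Complex.continuous_re.tendsto 0).comp hrad
    simp only [Complex.zero_re] at this
    have heq : ((Complex.re ∘ fun r : ℝ => g ((r:ℂ) * τ) / (1 - (r:ℂ))))
        = fun r : ℝ => (g ((r:ℂ) * τ)).re / (1 - r) := by
      funext r
      show (g ((r:ℂ) * τ) / (1 - (r:ℂ))).re = _
      rw [show (1 - (r:ℂ)) = (((1 - r : ℝ)):ℂ) by push_cast; ring, Complex.div_ofReal_re]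
    rwa [heq] at this
  -- Step 1 : (g 0).re = 0
  have hv0 : (g 0).re = 0 := by
    have hv_nonneg : 0 ≤ (g 0).re := hre 0 h0mem
    have hbound : ∀ᶠ r : ℝ in 𝓝[<] (1:ℝ), (g 0).re / 4 ≤ (g ((r:ℂ) * τ)).re / (1 - r) := by
      filter_upwards [Ioo_mem_nhdsLT_of_mem (by constructor <;> norm_num :
        (1:ℝ) ∈ Ioc (0:ℝ) 1)] with r hr
      obtain ⟨hr0, hr1⟩ := hr
      set z := (r:ℂ) * τ with hzdef
      have hzb : z ∈ ball (0:ℂ) 1 := by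
        rw [mem_ball_zero_iff, habsr r ⟨hr0, hr1⟩]; exact hr1
      set u := (g z).re with hu
      set v := (g 0).re with hv
      have hu0 : 0 ≤ u := hre z hzb
      have hkey : ∀ ε : ℝ, 0 < ε → (1 - r^2) * (v + ε) ≤ 2 * (1 + r^2) * (u + ε) := by
        intro ε hε
        have h := harnack_eps g hg hre z hzb ε hε
        rw [habsr r ⟨hr0, hr1⟩] at h
        rw [← hu, ← hv] at h
        have hvp : (0:ℝ) < v + ε := by linarith
        have hup : (0:ℝ) < u + ε := by linarith
        have hr2 : (0:ℝ) ≤ 1 - r^2 := by nlinarith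
        nlinarith [h, hvp, hup, hr2, mul_nonneg hr2 (sq_nonneg (u + ε))]
      have hmain : (1 - r^2) * v ≤ 2 * (1 + r^2) * u := by
        by_contra hcon
        push_neg at hcon
        set A := (1 - r^2) * v - 2 * (1 + r^2) * u with hA
        have hApos : 0 < A := by rw [hA]; linarith
        have := hkey (A / 8) (by linarith)
        have hr2 : r^2 ≤ 1 := by nlinarith
        nlinarith
      rw [div_le_div_iff₀ (by norm_num : (0:ℝ) < 4) (by linarith : (0:ℝ) < 1 - r)]
      nlinarith [hmain, mul_nonneg (mul_nonneg hv_nonneg hr0.le)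
        (by linarith : (0:ℝ) ≤ 1 - r), hv_nonneg, hu0]
    have := ge_of_tendsto hreRad hbound
    linarith
  -- Step 2 : Re g ≡ 0 on the ball
  have hre0 : ∀ z ∈ ball (0:ℂ) 1, (g z).re = 0 := by
    intro z hz
    set r := ‖z‖ with hr
    have hr1 : r < 1 := mem_ball_zero_iff.1 hz
    have hr0 : 0 ≤ r := norm_nonneg _
    set u := (g z).re with hu
    have hu0 : 0 ≤ u := hre z hz
    have hkey : ∀ ε : ℝ, 0 < ε → (1 - r^2) * (u + ε) ≤ 2 * (1 + r^2) * ε := by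
      intro ε hε
      have h := harnack_eps g hg hre z hz ε hε
      rw [hv0, ← hr, ← hu] at h
      have hup : (0:ℝ) < u + ε := by linarith
      have hr2 : (0:ℝ) ≤ 1 - r^2 := by nlinarith
      nlinarith [h, hup, hr2, sq_nonneg ε, mul_nonneg hr2 (sq_nonneg ε)]
    have hmain : (1 - r^2) * u ≤ 0 := by
      by_contra hcon
      push_neg at hcon
      set A := (1 - r^2) * u with hA
      have := hkey (A / 8) (by linarith)
      have hr2 : r^2 ≤ 1 := by nlinarith
      nlinarith
    have h1r : 0 < 1 - r^2 := by nlinarith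
    nlinarith
  -- Step 3 : g is constant on the ball
  have hconst : ∀ z ∈ ball (0:ℂ) 1, g z = g 0 := by
    have hderiv : ∀ z ∈ ball (0:ℂ) 1, HasDerivAt g 0 z := by
      intro z hz
      have hda : DifferentiableAt ℂ g z := hg.differentiableAt (isOpen_ball.mem_nhds hz)
      set c := deriv g z with hc
      have hd : HasDerivAt g c z := hda.hasDerivAt
      have hball : ∀ᶠ w in 𝓝 z, w ∈ ball (0:ℂ) 1 := isOpen_ball.mem_nhds hz
      -- real direction
      have he1 : HasDerivAt (fun w : ℂ => g (z + w)) c 0 := by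
        have h1 : HasDerivAt (fun w : ℂ => z + w) 1 0 := by
          simpa using (hasDerivAt_id (0:ℂ)).const_add z
        have := HasDerivAt.comp (0:ℂ) (by simpa using hd) h1
        simpa [Function.comp_def] using this
      have hre1 : HasDerivAt (fun x : ℝ => (g (z + (x:ℂ))).re) c.re 0 :=
        he1.real_of_complex
      have hev1 : (fun x : ℝ => (g (z + (x:ℂ))).re) =ᶠ[𝓝 (0:ℝ)] fun _ => 0 := by
        have hcont : Continuous (fun x : ℝ => z + (x:ℂ)) :=
          continuous_const.add Complex.continuous_ofReal
        have : ∀ᶠ x : ℝ in 𝓝 0, z + (x:ℂ) ∈ ball (0:ℂ) 1 := by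
          have := hcont.continuousAt (x := (0:ℝ))
          exact this.preimage_mem_nhds (by simpa using isOpen_ball.mem_nhds hz)
        filter_upwards [this] with x hx
        exact hre0 _ hx
      have hz1 : HasDerivAt (fun x : ℝ => (g (z + (x:ℂ))).re) 0 0 :=
        (hasDerivAt_const (0:ℝ) (0:ℝ)).congr_of_eventuallyEq hev1
      have hcre : c.re = 0 := hre1.unique hz1
      -- imaginary direction
      have he2 : HasDerivAt (fun w : ℂ => g (z + Complex.I * w)) (c * Complex.I) 0 := by
        have h1 : HasDerivAt (fun w : ℂ => z + Complex.I * w) Complex.I 0 := by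
          simpa using ((hasDerivAt_id (0:ℂ)).const_mul Complex.I).const_add z
        have := HasDerivAt.comp (0:ℂ) (by simpa using hd) h1
        simpa [mul_comm, Function.comp_def] using this
      have hre2 : HasDerivAt (fun x : ℝ => (g (z + Complex.I * (x:ℂ))).re) (c * Complex.I).re 0 :=
        he2.real_of_complex
      have hev2 : (fun x : ℝ => (g (z + Complex.I * (x:ℂ))).re) =ᶠ[𝓝 (0:ℝ)] fun _ => 0 := by
        have hcont : Continuous (fun x : ℝ => z + Complex.I * (x:ℂ)) :=
          continuous_const.add (continuous_const.mul Complex.continuous_ofReal)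
        have : ∀ᶠ x : ℝ in 𝓝 0, z + Complex.I * (x:ℂ) ∈ ball (0:ℂ) 1 := by
          have := hcont.continuousAt (x := (0:ℝ))
          exact this.preimage_mem_nhds (by simpa using isOpen_ball.mem_nhds hz)
        filter_upwards [this] with x hx
        exact hre0 _ hx
      have hz2 : HasDerivAt (fun x : ℝ => (g (z + Complex.I * (x:ℂ))).re) 0 0 :=
        (hasDerivAt_const (0:ℝ) (0:ℝ)).congr_of_eventuallyEq hev2
      have hcim : (c * Complex.I).re = 0 := hre2.unique hz2
      have : c = 0 := by
        apply Complex.ext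
        · exact hcre
        · have : c.re * Complex.I.re - c.im * Complex.I.im = 0 := by
            simpa [Complex.mul_re] using hcim
          simpa [Complex.I_re, Complex.I_im, hcre] using this
      rw [← this]; exact hd
    intro z hz
    have hfd0 : ∀ x ∈ ball (0:ℂ) 1, fderivWithin ℂ g (ball (0:ℂ) 1) x = 0 := by
      intro x hx
      have h1 : HasFDerivAt g (0 : ℂ →L[ℂ] ℂ) x := by
        have h2 := (hderiv x hx).hasFDerivAt
        rwa [show ContinuousLinearMap.toSpanSingleton ℂ (0:ℂ) = 0 from by
          ext; simp] at h2
      rw [fderivWithin_of_isOpen isOpen_ball hx]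
      exact h1.fderiv
    exact (convex_ball (0:ℂ) 1).is_const_of_fderivWithin_eq_zero hg hfd0 hz h0mem
  -- Step 4 : g 0 = 0
  have hg0 : g 0 = 0 := by
    by_contra hne
    have habs0 : 0 < ‖g 0‖ := norm_pos_iff.mpr hne
    have hev : ∀ᶠ r : ℝ in 𝓝[<] (1:ℝ),
        ‖g ((r:ℂ) * τ) / (1 - (r:ℂ))‖ < ‖g 0‖ := by
      have := Metric.tendsto_nhds.mp hrad (‖g 0‖) habs0
      filter_upwards [this] with r hr
      simpa [dist_zero_right] using hr
    have hge : ∀ᶠ r : ℝ in 𝓝[<] (1:ℝ),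
        ‖g 0‖ ≤ ‖g ((r:ℂ) * τ) / (1 - (r:ℂ))‖ := by
      filter_upwards [Ioo_mem_nhdsLT_of_mem (by constructor <;> norm_num :
        (1:ℝ) ∈ Ioc (0:ℝ) 1)] with r hr
      obtain ⟨hr0, hr1⟩ := hr
      have hzb : (r:ℂ) * τ ∈ ball (0:ℂ) 1 := by
        rw [mem_ball_zero_iff, habsr r ⟨hr0, hr1⟩]; exact hr1
      rw [hconst _ hzb, norm_div]
      have habs1 : ‖1 - (r:ℂ)‖ = 1 - r := by
        rw [show (1 - (r:ℂ)) = (((1 - r : ℝ)):ℂ) by push_cast; ring, Complex.norm_real, Real.norm_eq_abs,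
          abs_of_pos (by linarith)]
      rw [habs1, le_div_iff₀ (by linarith)]
      nlinarith [habs0.le]
    obtain ⟨r, h1, h2⟩ := (hev.and hge).exists
    linarith
  intro z hz
  rw [hconst z hz, hg0]
end

section
/- Let g be a holomorphic function on the open unit disk Δ with Re g(z) ≥ 0 for all z ∈ Δ, and let τ ∈ ∂Δ. If the angular limit k of g(z)/(1 - conj(τ)·z) as z → τ exists and is finite, then k is a nonnegative real number. -/
open Complex Metric Filter Set Asymptotics Topology

theorem angular_limit_nonneg_real
    (g : ℂ → ℂ) (τ : ℂ) (hτ : ‖τ‖ = 1)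
    (hg : DifferentiableOn ℂ g (ball (0:ℂ) 1))
    (hre : ∀ z ∈ ball (0:ℂ) 1, 0 ≤ (g z).re)
    (k : ℂ)
    (hlim : AngularTendsto (fun z => g z / (1 - (starRingEnd ℂ) τ * z)) τ k) :
    k.im = 0 ∧ 0 ≤ k.re := by
  have hpi : (0:ℝ) < Real.pi / 2 := by positivity
  -- main claim: for every θ in (-π/2, π/2), Re (k e^{iθ}) ≥ 0
  have claim : ∀ θ : ℝ, θ ∈ Ioo (-(Real.pi/2)) (Real.pi/2) →
      0 ≤ (k * Complex.exp (θ * I)).re := by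
    intro θ hθ
    have hc : 0 < Real.cos θ := Real.cos_pos_of_mem_Ioo hθ
    set c := Real.cos θ with hcdef
    have hc1 : c ≤ 1 := Real.cos_le_one θ
    set M : ℝ := 2 / c + 1 with hMdef
    have hM1 : 1 < M := by
      have h2c : (0:ℝ) < 2 / c := by positivity
      simp only [hMdef]; linarith
    have hMc : M * c = 2 + c := by
      rw [hMdef, add_mul, div_mul_cancel₀ _ hc.ne']; ring
    set e : ℂ := Complex.exp (θ * I) with he
    have habs_e : ‖e‖ = 1 := Complex.norm_exp_ofReal_mul_I θ
    have hene : e ≠ 0 := Complex.exp_ne_zero _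
    set φ : ℝ → ℂ := fun t => τ * (1 - t * e) with hφ
    -- norm computation
    have habsφ : ∀ t : ℝ, ‖φ t‖^2 = 1 + t^2 - 2*t*c := by
      intro t
      have h1 : ‖φ t‖ = ‖1 - (t:ℂ) * e‖ := by
        simp [hφ, map_mul, hτ]
      rw [h1, Complex.sq_norm, Complex.normSq_sub]
      have hre' : ((1:ℂ) * (starRingEnd ℂ) ((t:ℂ) * e)).re = t * c := by
        simp [Complex.mul_re, Complex.exp_ofReal_mul_I_re, Complex.exp_ofReal_mul_I_im, he,
          hcdef]
      rw [hre']
      have : Complex.normSq ((t:ℂ) * e) = t^2 := by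
        rw [Complex.normSq_mul, Complex.normSq_eq_norm_sq, Complex.normSq_eq_norm_sq, habs_e]
        simp [sq]
      rw [this]
      simp; ring
    have hmem : ∀ t ∈ Ioo (0:ℝ) c, φ t ∈ ball (0:ℂ) 1 ∩ StolzAt τ M := by
      intro t ht
      obtain ⟨ht0, htc⟩ := ht
      have ha2 := habsφ t
      have ha0 : 0 ≤ ‖φ t‖ := norm_nonneg _
      have hlt : ‖φ t‖ < 1 := by
        nlinarith [mul_pos ht0 (by linarith : (0:ℝ) < c - t)]
      constructor
      · simpa [mem_ball, Complex.dist_eq] using hlt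
      · -- τ - φ t = τ * (t * e), abs = t
        have hsub : ‖τ - φ t‖ = t := by
          have : τ - φ t = τ * ((t:ℂ) * e) := by simp [hφ]; ring
          rw [this, norm_mul, norm_mul, hτ, habs_e, Complex.norm_of_nonneg ht0.le]
          ring
        have key : t < M * (1 - ‖φ t‖) := by
          have h1 : 0 < c := hc
          nlinarith [sq_nonneg (1 - ‖φ t‖),
            mul_pos ht0 (by linarith : (0:ℝ) < c - t), hlt.le, ha0]
        simpa [StolzAt, hsub] using key
    -- the curve tends to τ within the Stolz angle
    have hneb : (𝓝[Ioo (0:ℝ) c] 0).NeBot := by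
      rw [← mem_closure_iff_nhdsWithin_neBot, closure_Ioo hc.ne]
      exact ⟨le_rfl, hc.le⟩
    have hφc : Continuous φ := by
      simp only [hφ]; fun_prop
    have hφ0 : φ 0 = τ := by simp [hφ]
    have htend : Tendsto φ (𝓝[Ioo (0:ℝ) c] 0) (𝓝[StolzAt τ M] τ) := by
      rw [tendsto_nhdsWithin_iff]
      constructor
      · have := (hφc.tendsto 0).mono_left (nhdsWithin_le_nhds (s := Ioo (0:ℝ) c))
        rwa [hφ0] at this
      · filter_upwards [self_mem_nhdsWithin] with t ht
        exact (hmem t ht).2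
    have hk1 : Tendsto (fun t : ℝ => g (φ t) / (1 - (starRingEnd ℂ) τ * φ t))
        (𝓝[Ioo (0:ℝ) c] 0) (𝓝 k) := (hlim M hM1).comp htend
    -- simplify the denominator
    have hden : ∀ t : ℝ, 1 - (starRingEnd ℂ) τ * φ t = (t:ℂ) * e := by
      intro t
      have hττ : (starRingEnd ℂ) τ * τ = 1 := by
        have h1 : Complex.normSq τ = 1 := by
          rw [Complex.normSq_eq_norm_sq, hτ]; norm_num
        calc (starRingEnd ℂ) τ * τ = τ * (starRingEnd ℂ) τ := by ring
        _ = (Complex.normSq τ : ℂ) := Complex.mul_conj τ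
        _ = 1 := by rw [h1]; norm_num
      calc 1 - (starRingEnd ℂ) τ * (τ * (1 - t * e))
          = 1 - ((starRingEnd ℂ) τ * τ) * (1 - t * e) := by ring
        _ = (t:ℂ) * e := by rw [hττ]; ring
    have hk2 : Tendsto (fun t : ℝ => g (φ t) / ((t:ℂ) * e))
        (𝓝[Ioo (0:ℝ) c] 0) (𝓝 k) := by
      refine hk1.congr (fun t => ?_)
      rw [hden]
    have hk3 : Tendsto (fun t : ℝ => g (φ t) / (t:ℂ))
        (𝓝[Ioo (0:ℝ) c] 0) (𝓝 (k * e)) := by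
      have := hk2.mul_const e
      refine this.congr' ?_
      filter_upwards [self_mem_nhdsWithin] with t ht
      have ht0 : (t:ℂ) ≠ 0 := by exact_mod_cast ht.1.ne'
      field_simp
    have hk4 : Tendsto (fun t : ℝ => (g (φ t) / (t:ℂ)).re)
        (𝓝[Ioo (0:ℝ) c] 0) (𝓝 ((k * e).re)) :=
      (Complex.continuous_re.tendsto _).comp hk3
    refine ge_of_tendsto hk4 ?_
    filter_upwards [self_mem_nhdsWithin] with t ht
    rw [Complex.div_ofReal_re]
    exact div_nonneg (hre _ (hmem t ht).1) ht.1.le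
  -- expand Re(k e^{iθ})
  have hf : ∀ θ : ℝ, (k * Complex.exp (θ * I)).re = k.re * Real.cos θ - k.im * Real.sin θ := by
    intro θ
    rw [Complex.mul_re, Complex.exp_ofReal_mul_I_re, Complex.exp_ofReal_mul_I_im]
  -- pass to the closed interval by continuity
  have hcont : Continuous (fun θ : ℝ => (k * Complex.exp ((θ:ℂ) * I)).re) := by fun_prop
  have hclosed : IsClosed {θ : ℝ | 0 ≤ (k * Complex.exp ((θ:ℂ) * I)).re} :=
    isClosed_le continuous_const hcont
  have hsub : Icc (-(Real.pi/2)) (Real.pi/2) ⊆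
      {θ : ℝ | 0 ≤ (k * Complex.exp ((θ:ℂ) * I)).re} := by
    rw [← closure_Ioo (by linarith : -(Real.pi/2) ≠ Real.pi/2)]
    exact closure_minimal claim hclosed
  have h0 : 0 ≤ k.re := by
    have := hsub (show (0:ℝ) ∈ Icc (-(Real.pi/2)) (Real.pi/2) from ⟨by linarith, by linarith⟩)
    rw [Set.mem_setOf_eq, hf] at this
    simpa using this
  have hp : 0 ≤ -k.im := by
    have := hsub (right_mem_Icc.mpr (by linarith))
    rw [Set.mem_setOf_eq, hf] at this
    simpa [Real.cos_pi_div_two, Real.sin_pi_div_two] using this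
  have hm : 0 ≤ k.im := by
    have := hsub (left_mem_Icc.mpr (by linarith))
    rw [Set.mem_setOf_eq, hf] at this
    simpa [Real.cos_pi_div_two, Real.sin_pi_div_two, Real.cos_neg, Real.sin_neg] using this
  exact ⟨le_antisymm (by linarith) hm, h0⟩
end

section
/- Let f be holomorphic on the open unit disk Δ and suppose f(z) = (z - τ)(1 - conj(τ)·z)·g(z) for some τ ∈ ∂Δ and some holomorphic g with Re g ≥ 0 on Δ. If f(z) = a(z-τ)³ + o(|z-τ|³) as z → τ non-tangentially for some a ∈ ℂ, then a·τ² is a nonnegative real number, and a = 0 if and only if f ≡ 0 on Δ. -/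
open Complex Metric Filter Set Asymptotics Topology

lemma stolz_subset_ball {τ : ℂ} {M : ℝ} (hM : 0 < M) : StolzAt τ M ⊆ ball (0:ℂ) 1 := by
  intro z hz
  simp only [StolzAt, mem_setOf_eq] at hz
  have h0 : (0:ℝ) ≤ ‖τ - z‖ := norm_nonneg _
  have h2 : 0 < M * (1 - ‖z‖) := lt_of_le_of_lt h0 hz
  have h1 : 0 < 1 - ‖z‖ := by
    by_contra h
    push_neg at h
    nlinarith
  simpa [mem_ball, dist_zero_right] using by linarith

lemma stolz_ne {τ z : ℂ} {M : ℝ} (hτ : ‖τ‖ = 1) (hz : z ∈ StolzAt τ M) : z ≠ τ := by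
  rintro rfl
  simp only [StolzAt, mem_setOf_eq, sub_self, norm_zero, hτ, sub_self, mul_zero] at hz
  exact lt_irrefl 0 hz

lemma conj_mul_self {τ : ℂ} (hτ : ‖τ‖ = 1) : (starRingEnd ℂ) τ * τ = 1 := by
  rw [mul_comm, Complex.mul_conj, Complex.normSq_eq_norm_sq, hτ]
  norm_num

lemma radial_tendsto {τ : ℂ} {M : ℝ} (hτ : ‖τ‖ = 1) (hM : 1 < M) :
    Tendsto (fun r : ℝ => (r : ℂ) * τ) (𝓝[<] (1:ℝ)) (𝓝[StolzAt τ M] τ) := by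
  apply tendsto_nhdsWithin_of_tendsto_nhds_of_eventually_within _
  · have : Tendsto (fun r : ℝ => (r : ℂ) * τ) (𝓝 (1:ℝ)) (𝓝 ((1:ℂ) * τ)) := by
      exact (Complex.continuous_ofReal.mul continuous_const).tendsto' 1 _ (by norm_num)
    simpa using this.mono_left nhdsWithin_le_nhds
  · filter_upwards [Ioo_mem_nhdsLT_of_mem (by norm_num : (1:ℝ) ∈ Set.Ioc 0 1)] with r hr
    obtain ⟨hr0, hr1⟩ := hr
    simp only [StolzAt, mem_setOf_eq]
    have habs : ‖(r:ℂ) * τ‖ = r := by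
      rw [norm_mul, hτ, Complex.norm_real, Real.norm_eq_abs, abs_of_pos hr0, mul_one]
    have h2 : ‖τ - (r:ℂ) * τ‖ = 1 - r := by
      have : τ - (r:ℂ)*τ = ((1:ℝ)-r : ℝ) * τ := by push_cast; ring
      rw [this, norm_mul, hτ, Complex.norm_real, Real.norm_eq_abs, abs_of_pos (by linarith), mul_one]
    rw [habs, h2]
    nlinarith

lemma stolz_neBot {τ : ℂ} {M : ℝ} (hτ : ‖τ‖ = 1) (hM : 1 < M) :
    (𝓝[StolzAt τ M] τ).NeBot := by
  have := radial_tendsto hτ hM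
  exact this.neBot

lemma q_tendsto (f g : ℂ → ℂ) (τ a : ℂ) (hτ : ‖τ‖ = 1) {M : ℝ} (hM : 1 < M)
    (hf : ∀ z ∈ ball (0:ℂ) 1, f z = (z - τ) * (1 - (starRingEnd ℂ) τ * z) * g z)
    (hexp : (fun z => f z - a * (z - τ) ^ 3) =o[𝓝[StolzAt τ M] τ]
        (fun z => ‖z - τ‖ ^ 3)) :
    Tendsto (fun z => (-(starRingEnd ℂ) τ * g z - a * (z - τ)) / (z - τ))
      (𝓝[StolzAt τ M] τ) (𝓝 0) := by
  have hmem : ∀ᶠ z in 𝓝[StolzAt τ M] τ, z ∈ StolzAt τ M := eventually_mem_nhdsWithin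
  have heq : ∀ᶠ z in 𝓝[StolzAt τ M] τ,
      f z - a * (z - τ) ^ 3 = (z - τ)^2 * (-(starRingEnd ℂ) τ * g z - a * (z - τ)) := by
    filter_upwards [hmem] with z hz
    rw [hf z (stolz_subset_ball (zero_lt_one.trans hM) hz)]
    have h1 : 1 - (starRingEnd ℂ) τ * z = -(starRingEnd ℂ) τ * (z - τ) := by
      have h2 := conj_mul_self hτ
      linear_combination -h2
    rw [h1]; ring
  have ho2 : (fun z => -(starRingEnd ℂ) τ * g z - a * (z - τ)) =o[𝓝[StolzAt τ M] τ]
      (fun z => z - τ) := by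
    rw [isLittleO_iff]
    intro c hc
    filter_upwards [heq, hmem, isLittleO_iff.1 hexp hc] with z h1 h2 h3
    have hzτ : z ≠ τ := stolz_ne hτ h2
    have hpos : 0 < ‖z - τ‖ := norm_pos_iff.2 (sub_ne_zero.2 hzτ)
    rw [h1] at h3
    have h4 : ‖z - τ‖^2 * ‖-(starRingEnd ℂ) τ * g z - a * (z - τ)‖ ≤
        c * ‖z - τ‖^3 := by
      simpa [norm_mul, norm_pow,
        Real.norm_of_nonneg (pow_nonneg (norm_nonneg _) 3)] using h3
    have h5 : ‖-(starRingEnd ℂ) τ * g z - a * (z - τ)‖ ≤ c * ‖z - τ‖ := by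
      have h6 : ‖z - τ‖^2 * ‖-(starRingEnd ℂ) τ * g z - a * (z - τ)‖ ≤
          ‖z - τ‖^2 * (c * ‖z - τ‖) := by
        calc _ ≤ c * ‖z - τ‖^3 := h4
        _ = _ := by ring
      exact le_of_mul_le_mul_left h6 (pow_pos hpos 2)
    simpa using h5
  exact ho2.tendsto_div_nhds_zero

lemma g_ident (g : ℂ → ℂ) (τ a z : ℂ) (hτ : ‖τ‖ = 1) (hz : z ≠ τ) :
    g z = -τ * (z - τ) * (a + (-(starRingEnd ℂ) τ * g z - a * (z - τ)) / (z - τ)) := by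
  have h1 : z - τ ≠ 0 := sub_ne_zero.2 hz
  have h2 := conj_mul_self hτ
  field_simp
  linear_combination (-g z) * h2

lemma part1 (g : ℂ → ℂ) (τ a : ℂ) (hτ : ‖τ‖ = 1)
    (hre : ∀ z ∈ ball (0:ℂ) 1, 0 ≤ (g z).re)
    (hq : ∀ M : ℝ, 1 < M →
      Tendsto (fun z => (-(starRingEnd ℂ) τ * g z - a * (z - τ)) / (z - τ))
        (𝓝[StolzAt τ M] τ) (𝓝 0))
    (s : ℝ) : s * (a * τ^2).im ≤ (a * τ^2).re := by
  set q : ℂ → ℂ := fun z => (-(starRingEnd ℂ) τ * g z - a * (z - τ)) / (z - τ) with hqdef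
  set c : ℝ := 1 + s^2 with hcdef
  have hc1 : 1 ≤ c := by nlinarith [sq_nonneg s]
  have hc0 : 0 < c := by linarith
  have hsc : 1 ≤ Real.sqrt c := by
    rw [show (1:ℝ) = Real.sqrt 1 by simp]
    exact Real.sqrt_le_sqrt hc1
  set M : ℝ := 2 * Real.sqrt c + 1 with hMdef
  have hM : 1 < M := by nlinarith
  set γ : ℝ → ℂ := fun t => τ * (1 - (t:ℂ) * (1 + (s:ℂ) * I)) with hγdef
  have habs_sq : ∀ t : ℝ, (‖γ t‖)^2 = 1 - 2*t + t^2*c := by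
    intro t
    have h1 : (1:ℂ) - (t:ℂ) * (1 + (s:ℂ)*I) = ((1-t : ℝ):ℂ) + ((-(t*s) : ℝ):ℂ) * I := by
      push_cast; ring
    rw [hγdef]
    simp only [norm_mul, hτ, one_mul, mul_pow, one_pow]
    rw [Complex.sq_norm, h1, Complex.normSq_add_mul_I]
    ring
  have hball : ∀ t ∈ Ioo (0:ℝ) (1/c), ‖γ t‖ ≤ 1 - t/2 := by
    intro t ht
    obtain ⟨ht0, ht1⟩ := ht
    have htc : t * c ≤ 1 := by
      rw [← le_div_iff₀ hc0] at *; linarith [le_of_lt ht1]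
    have h2 := habs_sq t
    have h3 : 0 ≤ ‖γ t‖ := norm_nonneg _
    have ht2 : t ≤ 1 := by nlinarith
    nlinarith [sq_nonneg (‖γ t‖ - (1 - t/2))]
  have hstolz : ∀ t ∈ Ioo (0:ℝ) (1/c), γ t ∈ StolzAt τ M := by
    intro t ht
    have hb := hball t ht
    obtain ⟨ht0, ht1⟩ := ht
    simp only [StolzAt, mem_setOf_eq]
    have h1 : τ - γ t = τ * ((t:ℂ) * (1 + (s:ℂ)*I)) := by rw [hγdef]; ring
    have h2 : ‖τ - γ t‖ = t * Real.sqrt c := by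
      rw [h1]
      simp only [norm_mul, hτ, one_mul, Complex.norm_real, Real.norm_eq_abs, abs_of_pos ht0]
      congr 1
      rw [Complex.norm_def]
      congr 1
      have : (1:ℂ) + (s:ℂ)*I = ((1:ℝ):ℂ) + (s:ℂ)*I := by norm_num
      rw [this, Complex.normSq_add_mul_I]
      rw [hcdef]; ring
    rw [h2]
    have hM0 : 0 < M := by linarith
    have : M * (t/2) ≤ M * (1 - ‖γ t‖) := by
      apply mul_le_mul_of_nonneg_left (by linarith) (le_of_lt hM0)
    nlinarith
  have htendγ : Tendsto γ (𝓝[>] (0:ℝ)) (𝓝[StolzAt τ M] τ) := by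
    apply tendsto_nhdsWithin_of_tendsto_nhds_of_eventually_within
    · have : Tendsto γ (𝓝 (0:ℝ)) (𝓝 (τ * (1 - (0:ℂ) * (1 + (s:ℂ)*I)))) := by
        apply Continuous.tendsto'
        · rw [hγdef]; continuity
        · simp [hγdef]
      simp only [zero_mul, sub_zero, mul_one] at this
      exact this.mono_left nhdsWithin_le_nhds
    · filter_upwards [Ioo_mem_nhdsGT_of_mem
        (by constructor <;> [rfl; positivity] : (0:ℝ) ∈ Set.Ico 0 (1/c))] with t ht
      exact hstolz t ht
  have hqγ : Tendsto (fun t => q (γ t)) (𝓝[>] (0:ℝ)) (𝓝 0) := (hq M hM).comp htendγ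
  set E : ℂ → ℝ := fun w => (τ^2 * (1 + (s:ℂ)*I) * (a + w)).re with hEdef
  have hE : Tendsto (fun t => E (q (γ t))) (𝓝[>] (0:ℝ)) (𝓝 (E 0)) := by
    apply (Continuous.tendsto _ 0).comp hqγ
    rw [hEdef]
    fun_prop
  have hEv : ∀ᶠ t in 𝓝[>] (0:ℝ), 0 ≤ E (q (γ t)) := by
    filter_upwards [Ioo_mem_nhdsGT_of_mem
      (by constructor <;> [rfl; positivity] : (0:ℝ) ∈ Set.Ico 0 (1/c))] with t ht
    have hmem := hstolz t ht
    have hballmem : γ t ∈ ball (0:ℂ) 1 := stolz_subset_ball (by linarith) hmem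
    have hne : γ t ≠ τ := stolz_ne hτ hmem
    have hgid := g_ident g τ a (γ t) hτ hne
    have h1 : γ t - τ = -τ * ((t:ℂ) * (1 + (s:ℂ)*I)) := by rw [hγdef]; ring
    have h2 : g (γ t) = (t:ℝ) * (τ^2 * (1 + (s:ℂ)*I) * (a + q (γ t))) := by
      rw [hgid, h1, hqdef]; push_cast; ring
    have h3 : (g (γ t)).re = t * E (q (γ t)) := by
      rw [h2, Complex.re_ofReal_mul, hEdef]
    have h4 := hre (γ t) hballmem
    rw [h3] at h4
    nlinarith [ht.1]
  have hfinal : 0 ≤ E 0 := ge_of_tendsto hE hEv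
  have h5 : E 0 = (a*τ^2).re - s * (a*τ^2).im := by
    rw [hEdef]
    simp only [add_zero]
    simp [Complex.mul_re, Complex.mul_im, Complex.add_re, Complex.add_im,
      Complex.ofReal_re, Complex.ofReal_im, Complex.I_re, Complex.I_im]
    ring
  linarith [hfinal, h5.symm.le, h5.le]

set_option maxHeartbeats 2000000 in
lemma rigid (g : ℂ → ℂ) (τ : ℂ) (hτ : ‖τ‖ = 1)
    (hg : DifferentiableOn ℂ g (ball (0:ℂ) 1))
    (hre : ∀ z ∈ ball (0:ℂ) 1, 0 ≤ (g z).re)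
    (hq : Tendsto (fun z => g z / (z - τ)) (𝓝[StolzAt τ 2] τ) (𝓝 0)) :
    ∀ z ∈ ball (0:ℂ) 1, g z = 0 := by
  have hQ : Tendsto (fun r : ℝ => g ((r:ℂ)*τ) / ((r:ℂ)*τ - τ)) (𝓝[<] (1:ℝ)) (𝓝 0) :=
    hq.comp (radial_tendsto hτ one_lt_two)
  have hN : Tendsto (fun r : ℝ => ‖g ((r:ℂ)*τ) / ((r:ℂ)*τ - τ)‖) (𝓝[<] (1:ℝ)) (𝓝 0) := by
    simpa using hQ.norm
  have hIoo : Ioo (0:ℝ) 1 ∈ 𝓝[<] (1:ℝ) := Ioo_mem_nhdsLT_of_mem (by norm_num)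
  -- norm of g at radial points
  have hnorm : ∀ r ∈ Ioo (0:ℝ) 1,
      ‖g ((r:ℂ)*τ)‖ = (1-r) * ‖g ((r:ℂ)*τ) / ((r:ℂ)*τ - τ)‖ := by
    intro r hr
    have hne : (r:ℂ)*τ - τ ≠ 0 := by
      intro h
      have : (r:ℂ)*τ = τ := by linear_combination h
      have := congrArg norm this
      rw [norm_mul, hτ, Complex.norm_real, Real.norm_eq_abs, mul_one, abs_of_pos hr.1] at this
      exact absurd this (ne_of_lt hr.2)
    have habs : ‖(r:ℂ)*τ - τ‖ = 1 - r := by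
      have h1 : (r:ℂ)*τ - τ = ((r - 1 : ℝ):ℂ) * τ := by push_cast; ring
      rw [h1, norm_mul, hτ, Complex.norm_real, Real.norm_eq_abs, mul_one, abs_of_neg (by linarith [hr.2])]
      ring
    rw [norm_div, habs, mul_comm ((1:ℝ) - r),
      div_mul_cancel₀ _ (by intro h; rw [sub_eq_zero] at h; exact absurd h.symm (ne_of_lt hr.2) : (1:ℝ) - r ≠ 0)]
  have hrb : ∀ r ∈ Ioo (0:ℝ) 1, (r:ℂ)*τ ∈ ball (0:ℂ) 1 := by
    intro r hr
    rw [mem_ball_zero_iff, norm_mul, hτ, Complex.norm_real, Real.norm_eq_abs, mul_one,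
      abs_of_pos hr.1]
    exact hr.2
  by_cases hex : ∃ z₁ ∈ ball (0:ℂ) 1, (g z₁).re = 0
  · -- g is constant, and the constant is 0
    obtain ⟨z₁, hz₁b, hz₁⟩ := hex
    set F : ℂ → ℂ := fun z => Complex.exp (-g z) with hFdef
    have hFd : DifferentiableOn ℂ F (ball (0:ℂ) 1) := hg.neg.cexp
    have hmax : IsMaxOn (norm ∘ F) (ball (0:ℂ) 1) z₁ := by
      intro z hz
      simp only [Function.comp_apply, hFdef, Complex.norm_exp,
        Complex.neg_re, hz₁, neg_zero]
      exact Real.exp_le_exp.2 (by simpa using neg_nonpos.2 (hre z hz))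
    have hconst : EqOn F (Function.const ℂ (F z₁)) (ball (0:ℂ) 1) :=
      Complex.eqOn_of_isPreconnected_of_isMaxOn_norm (convex_ball _ _).isPreconnected
        isOpen_ball hFd hz₁b hmax
    have hderiv : ∀ z ∈ ball (0:ℂ) 1, fderivWithin ℂ g (ball (0:ℂ) 1) z = 0 := by
      intro z hz
      have hmemn : ball (0:ℂ) 1 ∈ 𝓝 z := isOpen_ball.mem_nhds hz
      have hga : DifferentiableAt ℂ g z := hg.differentiableAt hmemn
      have hFg : HasDerivAt F (Complex.exp (-g z) * -deriv g z) z :=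
        (hga.hasDerivAt.neg).cexp
      have hF0 : deriv F z = 0 := by
        have hev : F =ᶠ[𝓝 z] Function.const ℂ (F z₁) := hconst.eventuallyEq_of_mem hmemn
        rw [hev.deriv_eq]
        exact deriv_const _ _
      have := hFg.deriv
      rw [hF0] at this
      have hg0 : deriv g z = 0 := by
        have hexp0 := Complex.exp_ne_zero (-g z)
        simpa [hexp0] using this.symm
      have h1 : HasDerivAt g 0 z := by
        simpa [hg0] using hga.hasDerivAt
      have h2 : HasFDerivAt g (0 : ℂ →L[ℂ] ℂ) z := by
        have h3 := h1.hasFDerivAt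
        have h4 : ContinuousLinearMap.toSpanSingleton ℂ (0:ℂ) = 0 := by
          ext; simp
        rwa [h4] at h3
      rw [fderivWithin_of_isOpen isOpen_ball hz]
      exact h2.fderiv
    have hgc : ∀ z ∈ ball (0:ℂ) 1, g z = g 0 := by
      intro z hz
      exact (convex_ball _ _).is_const_of_fderivWithin_eq_zero hg hderiv hz
        (by simp : (0:ℂ) ∈ ball (0:ℂ) 1)
    have hlim : Tendsto (fun r : ℝ => ‖g ((r:ℂ)*τ)‖) (𝓝[<] (1:ℝ)) (𝓝 0) := by
      have h2 : Tendsto (fun r : ℝ => (1-r) * ‖g ((r:ℂ)*τ) / ((r:ℂ)*τ - τ)‖)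
          (𝓝[<] (1:ℝ)) (𝓝 0) := by
        have h3 : Tendsto (fun r : ℝ => (1-r)) (𝓝[<] (1:ℝ)) (𝓝 0) := by
          have : Tendsto (fun r : ℝ => (1-r)) (𝓝 (1:ℝ)) (𝓝 0) :=
            (continuous_const.sub continuous_id).tendsto' 1 0 (by norm_num)
          exact this.mono_left nhdsWithin_le_nhds
        simpa using h3.mul hN
      exact h2.congr' (by filter_upwards [hIoo] with r hr; exact (hnorm r hr).symm)
    have hconst2 : Tendsto (fun _ : ℝ => ‖g 0‖) (𝓝[<] (1:ℝ)) (𝓝 0) := by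
      apply hlim.congr'
      filter_upwards [hIoo] with r hr
      rw [hgc _ (hrb r hr)]
    have : ‖g 0‖ = 0 := tendsto_nhds_unique tendsto_const_nhds hconst2
    intro z hz
    rw [hgc z hz, norm_eq_zero.1 this]
  · -- Re g > 0 everywhere: contradiction via Schwarz/Harnack
    exfalso
    push_neg at hex
    have hpos : ∀ z ∈ ball (0:ℂ) 1, 0 < (g z).re := fun z hz =>
      lt_of_le_of_ne (hre z hz) (Ne.symm (hex z hz))
    have h0b : (0:ℂ) ∈ ball (0:ℂ) 1 := by simp
    set g₀ := g 0 with hg₀def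
    have hu₀ : 0 < g₀.re := hpos 0 h0b
    have hden : ∀ z ∈ ball (0:ℂ) 1, g z + (starRingEnd ℂ) g₀ ≠ 0 := by
      intro z hz h
      have : (g z + (starRingEnd ℂ) g₀).re = (g z).re + g₀.re := by
        simp [Complex.add_re, Complex.conj_re]
      rw [h] at this
      simp at this
      nlinarith [hpos z hz]
    set φ : ℂ → ℂ := fun z => (g z - g₀) / (g z + (starRingEnd ℂ) g₀) with hφdef
    have hφd : DifferentiableOn ℂ φ (ball (0:ℂ) 1) :=
      (hg.sub (differentiableOn_const _)).div (hg.add (differentiableOn_const _)) hden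
    have hkey : ∀ z ∈ ball (0:ℂ) 1,
        Complex.normSq (g z + (starRingEnd ℂ) g₀) - Complex.normSq (g z - g₀)
          = 4 * g₀.re * (g z).re := by
      intro z hz
      simp [Complex.normSq_apply, Complex.add_re, Complex.add_im, Complex.sub_re,
        Complex.sub_im, Complex.conj_re, Complex.conj_im]
      ring
    have hmaps : MapsTo φ (ball (0:ℂ) 1) (ball (0:ℂ) 1) := by
      intro z hz
      rw [mem_ball_zero_iff, hφdef]
      have h1 : Complex.normSq (g z - g₀) < Complex.normSq (g z + (starRingEnd ℂ) g₀) := by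
        have := hkey z hz
        nlinarith [hpos z hz, hu₀]
      have h2 : ‖g z - g₀‖ < ‖g z + (starRingEnd ℂ) g₀‖ := by
        have e1 := Complex.sq_norm (g z - g₀)
        have e2 := Complex.sq_norm (g z + (starRingEnd ℂ) g₀)
        nlinarith [norm_nonneg (g z - g₀),
          norm_nonneg (g z + (starRingEnd ℂ) g₀)]
      rw [norm_div]
      have hpos2 : 0 < ‖g z + (starRingEnd ℂ) g₀‖ :=
        norm_pos_iff.2 (hden z hz)
      rw [div_lt_one hpos2]
      exact h2
    have hφ0 : φ 0 = 0 := by simp [hφdef, hg₀def]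
    have hschwarz : ∀ r ∈ Ioo (0:ℝ) 1, ‖φ ((r:ℂ)*τ)‖ ≤ r := by
      intro r hr
      have h1 : ‖(r:ℂ)*τ‖ < 1 := by
        rw [norm_mul, hτ, Complex.norm_real, Real.norm_eq_abs, mul_one, abs_of_pos hr.1]; exact hr.2
      have := Complex.norm_le_norm_of_mapsTo_ball hφd (hmaps.mono_right ball_subset_closedBall) hφ0 h1
      rwa [norm_mul, hτ, Complex.norm_real, Real.norm_eq_abs, mul_one, abs_of_pos hr.1] at this
    have hharnack : ∀ r ∈ Ioo (0:ℝ) 1, g₀.re ≤ 2 * ‖g ((r:ℂ)*τ) / ((r:ℂ)*τ - τ)‖ := by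
      intro r hr
      set z := (r:ℂ)*τ with hzdef
      have hzb : z ∈ ball (0:ℂ) 1 := hrb r hr
      have h1 := hschwarz r hr
      have hdenpos : 0 < ‖g z + (starRingEnd ℂ) g₀‖ :=
        norm_pos_iff.2 (hden z hzb)
      have h2 : ‖g z - g₀‖ ≤ r * ‖g z + (starRingEnd ℂ) g₀‖ := by
        rw [hφdef] at h1
        simp only [norm_div] at h1
        calc ‖g z - g₀‖
            = (‖g z - g₀‖ / ‖g z + (starRingEnd ℂ) g₀‖)
              * ‖g z + (starRingEnd ℂ) g₀‖ := by field_simp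
          _ ≤ r * ‖g z + (starRingEnd ℂ) g₀‖ :=
              mul_le_mul_of_nonneg_right h1 (le_of_lt hdenpos)
      have h3 : Complex.normSq (g z - g₀) ≤ r^2 * Complex.normSq (g z + (starRingEnd ℂ) g₀) := by
        have e1 := Complex.sq_norm (g z - g₀)
        have e2 := Complex.sq_norm (g z + (starRingEnd ℂ) g₀)
        nlinarith [norm_nonneg (g z - g₀), hr.1.le]
      have hexpand := hkey z hzb
      have hu : 0 < (g z).re := hpos z hzb
      have hs : Complex.normSq (g z - g₀) = ((g z).re - g₀.re)^2 + ((g z).im - g₀.im)^2 := by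
        simp [Complex.normSq_apply, Complex.sub_re, Complex.sub_im]; ring
      have hS : Complex.normSq (g z + (starRingEnd ℂ) g₀)
          = ((g z).re + g₀.re)^2 + ((g z).im - g₀.im)^2 := by
        simp [Complex.normSq_apply, Complex.add_re, Complex.add_im, Complex.conj_re,
          Complex.conj_im]; ring
      rw [hs, hS] at h3
      have hP : ((g z).re - g₀.re)^2 ≤ (r * ((g z).re + g₀.re))^2 := by
        nlinarith [mul_nonneg (by nlinarith [hr.1, hr.2] : (0:ℝ) ≤ 1 - r^2)
          (sq_nonneg ((g z).im - g₀.im))]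
      have hruu : 0 ≤ r * ((g z).re + g₀.re) := by
        apply mul_nonneg hr.1.le; nlinarith [hu, hu₀]
      have hlow : -(r * ((g z).re + g₀.re)) ≤ (g z).re - g₀.re := by
        nlinarith [hP, hruu]
      have h4 : g₀.re * (1 - r) ≤ 2 * (g z).re := by nlinarith [hr.1, hr.2, hu.le]
      have h5 : (g z).re ≤ ‖g z‖ := by
        exact Complex.re_le_norm _
      have h6 := hnorm r hr
      have h7 : 0 < 1 - r := by linarith [hr.2]
      rw [h6] at h5
      show g₀.re ≤ 2 * ‖g ((r:ℂ)*τ) / ((r:ℂ)*τ - τ)‖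
      nlinarith [h4, h5]
    have : g₀.re ≤ 0 := by
      have hlim2 : Tendsto (fun r : ℝ => 2 * ‖g ((r:ℂ)*τ) / ((r:ℂ)*τ - τ)‖)
          (𝓝[<] (1:ℝ)) (𝓝 0) := by simpa using hN.const_mul 2
      exact ge_of_tendsto hlim2 (by filter_upwards [hIoo] with r hr; exact hharnack r hr)
    linarith


theorem rigidity_generator_cubic
    (f g : ℂ → ℂ) (τ a : ℂ) (hτ : ‖τ‖ = 1)
    (hg : DifferentiableOn ℂ g (ball (0:ℂ) 1))
    (hre : ∀ z ∈ ball (0:ℂ) 1, 0 ≤ (g z).re)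
    (hf : ∀ z ∈ ball (0:ℂ) 1, f z = (z - τ) * (1 - (starRingEnd ℂ) τ * z) * g z)
    (hexp : ∀ M : ℝ, 1 < M →
      (fun z => f z - a * (z - τ) ^ 3) =o[𝓝[StolzAt τ M] τ]
        (fun z => ‖z - τ‖ ^ 3)) :
    ((a * τ ^ 2).im = 0 ∧ 0 ≤ (a * τ ^ 2).re) ∧
      (a = 0 ↔ ∀ z ∈ ball (0:ℂ) 1, f z = 0) := by
  have hq : ∀ M : ℝ, 1 < M →
      Tendsto (fun z => (-(starRingEnd ℂ) τ * g z - a * (z - τ)) / (z - τ))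
        (𝓝[StolzAt τ M] τ) (𝓝 0) := fun M hM => q_tendsto f g τ a hτ hM hf (hexp M hM)
  have hpt1 := part1 g τ a hτ hre hq
  constructor
  · constructor
    · by_contra him
      have := hpt1 (((a*τ^2).re + 1) / (a*τ^2).im)
      rw [div_mul_cancel₀ _ him] at this
      linarith
    · simpa using hpt1 0
  · constructor
    · intro ha z hz
      have hq2 : Tendsto (fun z => g z / (z - τ)) (𝓝[StolzAt τ 2] τ) (𝓝 0) := by
        have h1 := (hq 2 one_lt_two).const_mul (-τ)
        rw [mul_zero] at h1
        have h2 : (fun z => g z / (z - τ)) =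
            fun z => -τ * ((-(starRingEnd ℂ) τ * g z - a * (z - τ)) / (z - τ)) := by
          funext w
          rw [← mul_div_assoc]
          congr 1
          rw [ha]
          linear_combination (-(1:ℂ)) * g w * conj_mul_self hτ
        rw [h2]
        exact h1
      have hg0 := rigid g τ hτ hg hre hq2
      rw [hf z hz, hg0 z hz, mul_zero]
    · intro hf0
      have hg0 : ∀ z ∈ ball (0:ℂ) 1, g z = 0 := by
        intro z hz
        have h1 := (hf0 z hz).symm.trans (hf z hz)
        have hz1 : ‖z‖ < 1 := by
          simpa [mem_ball] using hz
        have hne1 : z - τ ≠ 0 := by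
          intro h
          rw [sub_eq_zero] at h
          rw [h, hτ] at hz1
          exact lt_irrefl 1 hz1
        have hne2 : 1 - (starRingEnd ℂ) τ * z ≠ 0 := by
          intro h
          rw [sub_eq_zero] at h
          have := congrArg norm h
          rw [norm_one, norm_mul, Complex.norm_conj, hτ, one_mul] at this
          rw [← this] at hz1
          exact lt_irrefl 1 hz1
        rcases mul_eq_zero.1 h1.symm with h2 | h2
        · rcases mul_eq_zero.1 h2 with h3 | h3
          · exact absurd h3 hne1
          · exact absurd h3 hne2
        · exact h2
      haveI : (𝓝[StolzAt τ 2] τ).NeBot := stolz_neBot hτ one_lt_two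
      have hconst : Tendsto (fun _ : ℂ => -a) (𝓝[StolzAt τ 2] τ) (𝓝 0) := by
        apply (hq 2 one_lt_two).congr'
        filter_upwards [eventually_mem_nhdsWithin] with z hz
        have hzb := stolz_subset_ball (by norm_num : (0:ℝ) < 2) hz
        have hne : z - τ ≠ 0 := sub_ne_zero.2 (stolz_ne hτ hz)
        rw [hg0 z hzb]
        field_simp
        ring
      have h9 := tendsto_nhds_unique hconst tendsto_const_nhds
      exact neg_eq_zero.1 h9.symm
end

section
/- Let f be holomorphic on the open unit disk Δ of the form f(z) = a - conj(a)·z² + z·p(z), where a ∈ ℂ and p is holomorphic with Re p(z) ≥ 0 on Δ. Suppose τ ∈ ∂Δ satisfies f(τ) = 0 (f extends continuously at τ with value 0) and f has a finite angular derivative f'(τ) at τ. Then f'(τ) is real and f'(τ) ≤ -2·Re(conj(a)·τ). -/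
open Complex Metric Filter Set Asymptotics Topology

theorem generator_boundary_null_point_derivative
    (f p : ℂ → ℂ) (a τ k : ℂ) (hτ : ‖τ‖ = 1)
    (hp : DifferentiableOn ℂ p (ball (0:ℂ) 1))
    (hre : ∀ z ∈ ball (0:ℂ) 1, 0 ≤ (p z).re)
    (hf : ∀ z ∈ ball (0:ℂ) 1, f z = a - (starRingEnd ℂ) a * z ^ 2 + z * p z)
    (hderiv : AngularTendsto (fun z => f z / (z - τ)) τ k) :
    k.im = 0 ∧ k.re ≤ -2 * ((starRingEnd ℂ) a * τ).re := by
  set q : ℂ := (starRingEnd ℂ) a * τ - a * (starRingEnd ℂ) τ with hq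
  set m : ℂ := k - q + 2 * (starRingEnd ℂ) a * τ with hm
  have hτ0 : τ ≠ 0 := by
    intro h; rw [h] at hτ; simp at hτ
  have hττ : τ * (starRingEnd ℂ) τ = 1 := by
    rw [Complex.mul_conj, Complex.normSq_eq_norm_sq, hτ]; norm_num
  have hqre : q.re = 0 := by
    simp only [hq, Complex.sub_re, Complex.mul_re, Complex.conj_re, Complex.conj_im]
    ring
  -- key directional claim
  have key : ∀ ζ : ℂ, 0 < ζ.re → 0 ≤ ((-m) * ζ).re := by
    intro ζ hζre
    have hζ0 : ζ ≠ 0 := by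
      intro h; rw [h] at hζre; simp at hζre
    have habsζ : 0 < ‖ζ‖ := norm_pos_iff.mpr hζ0
    set δ : ℝ := ζ.re / (‖ζ‖) ^ 2 with hδdef
    have hδ : 0 < δ := div_pos hζre (by positivity)
    set M : ℝ := 1 + 2 * ‖ζ‖ / ζ.re with hMdef
    have hM1 : 1 < M := by
      have : 0 < 2 * ‖ζ‖ / ζ.re := by positivity
      rw [hMdef]; linarith
    have hMζ : M * ζ.re = ζ.re + 2 * ‖ζ‖ := by
      rw [hMdef]; field_simp
    set c : ℝ → ℂ := fun t => τ * (1 - (t : ℂ) * ζ) with hcdef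
    have hcont : Tendsto c (𝓝[>] (0:ℝ)) (𝓝 τ) := by
      have h1 : Continuous c := by fun_prop
      have h2 : c 0 = τ := by simp [hcdef]
      exact (h2 ▸ h1.tendsto 0).mono_left nhdsWithin_le_nhds
    have habs : ∀ t : ℝ, (‖c t‖) ^ 2
        = 1 - 2 * t * ζ.re + t ^ 2 * (‖ζ‖) ^ 2 := by
      intro t
      have h1 : ‖c t‖ = ‖1 - (t : ℂ) * ζ‖ := by
        simp [hcdef, map_mul, hτ]
      have h2 : (‖ζ‖) ^ 2 = ζ.re ^ 2 + ζ.im ^ 2 := by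
        rw [Complex.sq_norm, Complex.normSq_apply]; ring
      rw [h1, Complex.sq_norm, Complex.normSq_apply, h2]
      simp [Complex.sub_re, Complex.sub_im, Complex.mul_re, Complex.mul_im]
      ring
    have hsq : ∀ t ∈ Ioo (0:ℝ) δ, (‖c t‖) ^ 2 < 1 - t * ζ.re := by
      intro t ht
      have htδ : t * (‖ζ‖) ^ 2 < ζ.re := by
        have := ht.2
        rw [hδdef, lt_div_iff₀ (by positivity)] at this
        linarith
      have := habs t
      nlinarith [ht.1]
    have hball : ∀ t ∈ Ioo (0:ℝ) δ, c t ∈ ball (0:ℂ) 1 := by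
      intro t ht
      have h2 := hsq t ht
      have hb0 := norm_nonneg (c t)
      have : ‖c t‖ < 1 := by nlinarith [mul_pos ht.1 hζre]
      simpa [mem_ball, Complex.dist_eq] using this
    have hstolzmem : ∀ t ∈ Ioo (0:ℝ) δ, c t ∈ StolzAt τ M := by
      intro t ht
      have h3 : τ - c t = τ * ((t : ℂ) * ζ) := by rw [hcdef]; ring
      have h4 : ‖τ - c t‖ = t * ‖ζ‖ := by
        rw [h3, norm_mul, norm_mul, hτ, Complex.norm_real, Real.norm_eq_abs, abs_of_pos ht.1]
        ring
      have h2 := hsq t ht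
      have hb0 := norm_nonneg (c t)
      have hb1 : ‖c t‖ < 1 := by nlinarith [mul_pos ht.1 hζre]
      have h2b : t * ζ.re ≤ 2 * (1 - ‖c t‖) := by nlinarith
      have hM0 : (0:ℝ) ≤ M := by linarith
      have hkey := mul_le_mul_of_nonneg_left h2b hM0
      rw [StolzAt, mem_setOf_eq, h4]
      nlinarith [mul_pos ht.1 hζre, mul_pos ht.1 habsζ]
    have hIoo : Ioo (0:ℝ) δ ∈ 𝓝[>] (0:ℝ) := Ioo_mem_nhdsGT_of_mem ⟨le_rfl, hδ⟩
    have hstolz : Tendsto c (𝓝[>] (0:ℝ)) (𝓝[StolzAt τ M] τ) := by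
      rw [tendsto_nhdsWithin_iff]
      refine ⟨hcont, ?_⟩
      filter_upwards [hIoo] with t ht using hstolzmem t ht
    have hk1 : Tendsto (fun t => f (c t) / (c t - τ)) (𝓝[>] (0:ℝ)) (𝓝 k) :=
      (hderiv M hM1).comp hstolz
    have hctne : ∀ t ∈ Ioo (0:ℝ) δ, c t - τ ≠ 0 := by
      intro t ht
      have h3 : c t - τ = -(τ * ((t : ℂ) * ζ)) := by rw [hcdef]; ring
      rw [h3, neg_ne_zero]
      have ht0 : ((t:ℝ):ℂ) ≠ 0 := by
        exact_mod_cast ne_of_gt ht.1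
      exact mul_ne_zero hτ0 (mul_ne_zero ht0 hζ0)
    have hcne0 : ∀ᶠ t in 𝓝[>] (0:ℝ), c t ≠ 0 := hcont.eventually_ne hτ0
    have hsub : Tendsto (fun t => q - (starRingEnd ℂ) a * (c t + τ)) (𝓝[>] (0:ℝ))
        (𝓝 (q - (starRingEnd ℂ) a * (τ + τ))) :=
      tendsto_const_nhds.sub (tendsto_const_nhds.mul (hcont.add tendsto_const_nhds))
    have hk2 : Tendsto (fun t => c t * (p (c t) - q) / (c t - τ)) (𝓝[>] (0:ℝ)) (𝓝 m) := by
      have hsubbed := hk1.sub hsub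
      have hmval : k - (q - (starRingEnd ℂ) a * (τ + τ)) = m := by rw [hm]; ring
      rw [hmval] at hsubbed
      refine hsubbed.congr' ?_
      filter_upwards [hIoo] with t ht
      have hz := hball t ht
      have hne := hctne t ht
      rw [hf (c t) hz]
      have hid : a - (starRingEnd ℂ) a * (c t) ^ 2 + (c t) * p (c t)
          = (c t - τ) * (q - (starRingEnd ℂ) a * (c t + τ)) + c t * (p (c t) - q) := by
        rw [hq]; linear_combination (-a) * hττ
      rw [hid]
      field_simp
      ring
    have hfrac : Tendsto (fun t => (c t - τ) / ((t : ℂ) * c t)) (𝓝[>] (0:ℝ)) (𝓝 (-ζ)) := by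
      have h1 : Tendsto (fun t => -(τ * ζ) / c t) (𝓝[>] (0:ℝ)) (𝓝 (-(τ * ζ) / τ)) :=
        tendsto_const_nhds.div hcont hτ0
      have h2 : -(τ * ζ) / τ = -ζ := by field_simp
      rw [h2] at h1
      refine h1.congr' ?_
      filter_upwards [hIoo, hcne0] with t ht hc0
      have ht0 : ((t:ℝ):ℂ) ≠ 0 := by exact_mod_cast ne_of_gt ht.1
      have h3 : c t - τ = -((t : ℂ) * τ * ζ) := by rw [hcdef]; ring
      rw [h3]
      field_simp
    have hk3 : Tendsto (fun t => (p (c t) - q) / (t : ℂ)) (𝓝[>] (0:ℝ)) (𝓝 (-m * ζ)) := by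
      have h1 := hk2.mul hfrac
      have h2 : m * -ζ = -m * ζ := by ring
      rw [h2] at h1
      refine h1.congr' ?_
      filter_upwards [hIoo, hcne0] with t ht hc0
      have hne := hctne t ht
      have ht0 : ((t:ℝ):ℂ) ≠ 0 := by exact_mod_cast ne_of_gt ht.1
      field_simp
    have hrelim : Tendsto (fun t => ((p (c t) - q) / (t : ℂ)).re) (𝓝[>] (0:ℝ))
        (𝓝 ((-m * ζ).re)) := (Complex.continuous_re.tendsto _).comp hk3
    refine ge_of_tendsto hrelim ?_
    filter_upwards [hIoo] with t ht
    have hz := hball t ht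
    have hpre := hre (c t) hz
    rw [Complex.div_ofReal_re]
    have : (p (c t) - q).re = (p (c t)).re := by
      rw [Complex.sub_re, hqre]; ring
    rw [this]
    exact div_nonneg hpre ht.1.le
  -- extract real/imaginary information about m
  have hre1 : m.re ≤ 0 := by
    have := key 1 (by norm_num)
    simp [Complex.mul_re, Complex.neg_re, Complex.neg_im] at this
    linarith
  have him : m.im = 0 := by
    have h1 : ∀ ε : ℝ, 0 < ε → 0 ≤ -m.re * ε + m.im := by
      intro ε hε
      have hk := key ((ε : ℂ) + I) (by simp [Complex.add_re, Complex.I_re]; exact hε)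
      simp only [Complex.mul_re, Complex.add_re, Complex.add_im, Complex.I_re, Complex.I_im,
        Complex.neg_re, Complex.neg_im, Complex.ofReal_re, Complex.ofReal_im] at hk
      linarith
    have h2 : ∀ ε : ℝ, 0 < ε → 0 ≤ -m.re * ε - m.im := by
      intro ε hε
      have hk := key ((ε : ℂ) - I) (by simp [Complex.sub_re, Complex.I_re]; exact hε)
      simp only [Complex.mul_re, Complex.sub_re, Complex.sub_im, Complex.I_re, Complex.I_im,
        Complex.neg_re, Complex.neg_im, Complex.ofReal_re, Complex.ofReal_im] at hk
      linarith
    have hT1 : Tendsto (fun ε : ℝ => -m.re * ε + m.im) (𝓝[>] (0:ℝ)) (𝓝 m.im) := by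
      have : Tendsto (fun ε : ℝ => -m.re * ε + m.im) (𝓝 (0:ℝ)) (𝓝 (-m.re * 0 + m.im)) := by
        exact (Continuous.tendsto (by fun_prop) 0)
      simpa using this.mono_left nhdsWithin_le_nhds
    have hT2 : Tendsto (fun ε : ℝ => -m.re * ε - m.im) (𝓝[>] (0:ℝ)) (𝓝 (-m.im)) := by
      have : Tendsto (fun ε : ℝ => -m.re * ε - m.im) (𝓝 (0:ℝ)) (𝓝 (-m.re * 0 - m.im)) := by
        exact (Continuous.tendsto (by fun_prop) 0)
      simpa using this.mono_left nhdsWithin_le_nhds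
    have ha : 0 ≤ m.im := by
      refine ge_of_tendsto hT1 ?_
      filter_upwards [self_mem_nhdsWithin] with ε hε using h1 ε hε
    have hb : 0 ≤ -m.im := by
      refine ge_of_tendsto hT2 ?_
      filter_upwards [self_mem_nhdsWithin] with ε hε using h2 ε hε
    linarith
  -- conclude
  have hk' : k = m + q - 2 * (starRingEnd ℂ) a * τ := by rw [hm]; ring
  constructor
  · rw [hk', mul_assoc]
    simp only [Complex.add_im, Complex.sub_im, hq, Complex.mul_im, Complex.mul_re,
      Complex.re_ofNat, Complex.im_ofNat, Complex.conj_re, Complex.conj_im, him]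
    ring
  · rw [hk', mul_assoc]
    simp only [Complex.add_re, Complex.sub_re, hqre, Complex.mul_re,
      Complex.re_ofNat, Complex.im_ofNat]
    linarith
end

section
/- Let f(z) = a - conj(a)·z² + z·p(z) on the unit disk Δ with Re p ≥ 0, and suppose f(τ) = 0 at τ ∈ ∂Δ with finite angular derivative f'(τ). If f'(τ) = -2·Re(conj(a)·τ), then p is constant, equal to 2i·Im(conj(a)·τ), so that f(z) = a + 2i·Im(conj(a)·τ)·z - conj(a)·z². -/
open Complex Metric Filter Set Asymptotics Topology

lemma neBot_aux : (𝓝[Ico (0:ℝ) 1] (1:ℝ)).NeBot := by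
  apply mem_closure_iff_nhdsWithin_neBot.mp
  rw [closure_Ico (by norm_num : (0:ℝ) ≠ 1)]
  exact right_mem_Icc.mpr (by norm_num)

lemma mem_ball_aux {τ : ℂ} (hτ : ‖τ‖ = 1) {r : ℝ} (hr : r ∈ Ico (0:ℝ) 1) :
    ((r:ℂ) * τ) ∈ ball (0:ℂ) 1 := by
  rw [mem_ball_zero_iff]
  simpa [norm_mul, hτ, _root_.abs_of_nonneg hr.1] using hr.2

lemma const_of_re_nonneg_of_radial (q : ℂ → ℂ) (τ : ℂ) (hτ : ‖τ‖ = 1)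
    (hq : DifferentiableOn ℂ q (ball (0:ℂ) 1))
    (hre : ∀ z ∈ ball (0:ℂ) 1, 0 ≤ (q z).re)
    (hlim : Tendsto (fun r : ℝ => q ((r:ℂ) * τ) / ((r:ℂ) - 1)) (𝓝[Ico (0:ℝ) 1] 1) (𝓝 0)) :
    ∀ z ∈ ball (0:ℂ) 1, q z = 0 := by
  haveI : (𝓝[Ico (0:ℝ) 1] (1:ℝ)).NeBot := neBot_aux
  -- eventually facts
  have hevmem : ∀ᶠ r : ℝ in 𝓝[Ico (0:ℝ) 1] 1, r ∈ Ico (0:ℝ) 1 :=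
    eventually_mem_nhdsWithin
  -- radial limit of q itself
  have hq_rad : Tendsto (fun r : ℝ => q ((r:ℂ) * τ)) (𝓝[Ico (0:ℝ) 1] 1) (𝓝 0) := by
    have h2 : Tendsto (fun r : ℝ => ((r:ℂ) - 1)) (𝓝[Ico (0:ℝ) 1] 1) (𝓝 0) := by
      have : Continuous fun r : ℝ => ((r:ℂ) - 1) := by continuity
      have := this.tendsto' 1 0 (by norm_num)
      exact this.mono_left nhdsWithin_le_nhds
    have := hlim.mul h2
    rw [mul_zero] at this
    refine this.congr' ?_
    filter_upwards [hevmem] with r hr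
    have hne : ((r:ℂ) - 1) ≠ 0 :=
      sub_ne_zero.mpr (by exact_mod_cast ne_of_lt hr.2)
    field_simp
  -- radial limit of re q / (r-1)
  have hre_rad : Tendsto (fun r : ℝ => (q ((r:ℂ) * τ)).re / (r - 1)) (𝓝[Ico (0:ℝ) 1] 1) (𝓝 0) := by
    have := (Complex.continuous_re.tendsto 0).comp hlim
    simp only [Complex.zero_re] at this
    refine this.congr' ?_
    filter_upwards [hevmem] with r hr
    have : ((r:ℂ) - 1) = ((r - 1 : ℝ) : ℂ) := by push_cast; ring
    simp only [Function.comp_apply, this, Complex.div_ofReal_re]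
  by_cases hcase : ∀ z ∈ ball (0:ℂ) 1, 0 < (q z).re
  · -- Harnack contradiction
    exfalso
    have h0 : (0:ℂ) ∈ ball (0:ℂ) 1 := by simp
    have hu0 : 0 < (q 0).re := hcase 0 h0
    set w : ℂ → ℂ := fun z => (q z - q 0) / (q z + (starRingEnd ℂ) (q 0)) with hw
    have hden : ∀ z ∈ ball (0:ℂ) 1, q z + (starRingEnd ℂ) (q 0) ≠ 0 := by
      intro z hz h
      have := congrArg Complex.re h
      simp only [Complex.add_re, Complex.conj_re, Complex.zero_re] at this
      have := hcase z hz
      linarith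
    have hwdiff : DifferentiableOn ℂ w (ball (0:ℂ) 1) :=
      (hq.sub (differentiableOn_const _)).div (hq.add (differentiableOn_const _)) hden
    have hw0 : w 0 = 0 := by simp [hw]
    have hmaps : MapsTo w (ball (0:ℂ) 1) (ball (0:ℂ) 1) := by
      intro z hz
      rw [mem_ball_zero_iff, hw]
      simp only
      rw [norm_div, div_lt_one (norm_pos_iff.mpr (hden z hz))]
      have h1 : (‖q z - q 0‖)^2 < (‖q z + (starRingEnd ℂ) (q 0)‖)^2 := by
        rw [Complex.sq_norm, Complex.sq_norm]
        simp only [Complex.normSq_apply, Complex.sub_re, Complex.sub_im, Complex.add_re,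
          Complex.add_im, Complex.conj_re, Complex.conj_im]
        nlinarith [hcase z hz, hu0]
      exact lt_of_pow_lt_pow_left₀ 2 (norm_nonneg _) h1
    have hSch : ∀ r ∈ Ico (0:ℝ) 1,
        ‖w ((r:ℂ) * τ)‖ ≤ r := by
      intro r hr
      have habs : ‖(r:ℂ) * τ‖ = r := by
        simp [norm_mul, hτ, _root_.abs_of_nonneg hr.1]
      have := Complex.norm_le_norm_of_mapsTo_ball hwdiff (hmaps.mono_right ball_subset_closedBall) hw0
        (z := (r:ℂ) * τ) (by rw [habs]; exact hr.2)
      rwa [habs] at this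
    have harnack : ∀ r ∈ Ico (0:ℝ) 1, (q 0).re / 2 ≤ (q ((r:ℂ) * τ)).re / (1 - r) := by
      intro r hr
      have hz := mem_ball_aux hτ hr
      have hu : 0 < (q ((r:ℂ)*τ)).re := hcase _ hz
      have hS := hSch r hr
      rw [hw] at hS
      simp only at hS
      rw [norm_div, div_le_iff₀ (norm_pos_iff.mpr (hden _ hz))] at hS
      have hsq : (‖q ((r:ℂ)*τ) - q 0‖)^2 ≤
          (r * ‖q ((r:ℂ)*τ) + (starRingEnd ℂ) (q 0)‖)^2 := by
        apply pow_le_pow_left₀ (norm_nonneg _) hS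
      rw [mul_pow, Complex.sq_norm, Complex.sq_norm] at hsq
      simp only [Complex.normSq_apply, Complex.sub_re, Complex.sub_im, Complex.add_re,
        Complex.add_im, Complex.conj_re, Complex.conj_im] at hsq
      have h1r2 : 0 ≤ 1 - r^2 := by nlinarith [hr.1, hr.2]
      have h2 : ((q ((r:ℂ)*τ)).re - (q 0).re)^2 ≤ (r * ((q ((r:ℂ)*τ)).re + (q 0).re))^2 := by
        nlinarith [mul_nonneg h1r2 (sq_nonneg ((q ((r:ℂ)*τ)).im - (q 0).im))]
      have hkey : (q 0).re * (1 - r) ≤ (q ((r:ℂ)*τ)).re * (1 + r) := by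
        nlinarith [h2, mul_nonneg hr.1 (add_pos hu hu0).le]
      rw [div_le_div_iff₀ (by norm_num) (by linarith [hr.2] : (0:ℝ) < 1 - r)]
      nlinarith [hu, hr.1]
    have hre_rad' : Tendsto (fun r : ℝ => (q ((r:ℂ) * τ)).re / (1 - r))
        (𝓝[Ico (0:ℝ) 1] 1) (𝓝 0) := by
      have := hre_rad.neg
      rw [neg_zero] at this
      refine this.congr (fun r => ?_)
      rw [← neg_div_neg_eq]
      ring_nf
    have hle : (q 0).re / 2 ≤ 0 :=
      ge_of_tendsto hre_rad' (eventually_of_mem self_mem_nhdsWithin (fun r hr => harnack r hr))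
    linarith
  · push_neg at hcase
    obtain ⟨z0, hz0, hz0le⟩ := hcase
    have hz0re : (q z0).re = 0 := le_antisymm hz0le (hre z0 hz0)
    set g : ℂ → ℂ := fun z => Complex.exp (-q z) with hg
    have hgdiff : DifferentiableOn ℂ g (ball (0:ℂ) 1) := hq.neg.cexp
    have hmax : IsMaxOn (norm ∘ g) (ball (0:ℂ) 1) z0 := by
      intro z hz
      simp only [Set.mem_setOf_eq, Function.comp_apply, hg, Complex.norm_exp, Complex.neg_re]
      exact Real.exp_le_exp.mpr (by linarith [hre z hz, hz0re])
    have heq : EqOn g (Function.const ℂ (g z0)) (ball (0:ℂ) 1) :=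
      Complex.eqOn_of_isPreconnected_of_isMaxOn_norm
        (convex_ball (0:ℂ) 1).isPreconnected isOpen_ball hgdiff hz0 hmax
    have hd0 : ∀ x ∈ ball (0:ℂ) 1, deriv q x = 0 := by
      intro x hx
      have hqx : DifferentiableAt ℂ q x := hq.differentiableAt (isOpen_ball.mem_nhds hx)
      have h1 : HasDerivAt g (Complex.exp (-q x) * (-deriv q x)) x :=
        hqx.hasDerivAt.neg.cexp
      have h2 : HasDerivAt g 0 x :=
        (hasDerivAt_const x (g z0)).congr_of_eventuallyEq
          (Filter.eventuallyEq_of_mem (isOpen_ball.mem_nhds hx) heq)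
      have h3 := h1.unique h2
      have h4 := Complex.exp_ne_zero (-q x)
      field_simp at h3
      exact (mul_eq_zero.mp (neg_eq_zero.mp h3)).resolve_left h4
    have hconst : ∀ z ∈ ball (0:ℂ) 1, q z = q z0 := by
      intro z hz
      refine (convex_ball (0:ℂ) 1).is_const_of_fderivWithin_eq_zero hq ?_ hz hz0
      intro x hx
      have hqx : DifferentiableAt ℂ q x := hq.differentiableAt (isOpen_ball.mem_nhds hx)
      rw [fderivWithin_of_isOpen isOpen_ball hx]
      ext v
      simp [hqx.hasDerivAt.hasFDerivAt.fderiv, hd0 x hx]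
    have hval : q z0 = 0 := by
      refine tendsto_nhds_unique ?_ hq_rad
      refine Tendsto.congr' ?_ (tendsto_const_nhds (x := q z0))
      filter_upwards [hevmem] with r hr
      exact (hconst _ (mem_ball_aux hτ hr)).symm
    intro z hz
    rw [hconst z hz, hval]

theorem generator_extremal_derivative_is_automorphism_generator
    (f p : ℂ → ℂ) (a τ : ℂ) (hτ : ‖τ‖ = 1)
    (hp : DifferentiableOn ℂ p (ball (0:ℂ) 1))
    (hre : ∀ z ∈ ball (0:ℂ) 1, 0 ≤ (p z).re)
    (hf : ∀ z ∈ ball (0:ℂ) 1, f z = a - (starRingEnd ℂ) a * z ^ 2 + z * p z)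
    (hderiv : AngularTendsto (fun z => f z / (z - τ)) τ
      ((-2 * ((starRingEnd ℂ) a * τ).re : ℝ) : ℂ)) :
    (∀ z ∈ ball (0:ℂ) 1, p z = (2 * ((starRingEnd ℂ) a * τ).im : ℝ) * Complex.I) ∧
      (∀ z ∈ ball (0:ℂ) 1,
        f z = a + (2 * ((starRingEnd ℂ) a * τ).im : ℝ) * Complex.I * z
          - (starRingEnd ℂ) a * z ^ 2) := by
  haveI : (𝓝[Ico (0:ℝ) 1] (1:ℝ)).NeBot := neBot_aux
  set c : ℂ := ((2 * ((starRingEnd ℂ) a * τ).im : ℝ) : ℂ) * Complex.I with hcdef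
  have hτ1 : τ * (starRingEnd ℂ) τ = 1 := by
    rw [Complex.mul_conj, Complex.normSq_eq_norm_sq, hτ]
    norm_num
  have hτ0 : τ ≠ 0 := by
    intro h; rw [h] at hτ; simp at hτ
  have hcβ : c = (starRingEnd ℂ) a * τ - a * (starRingEnd ℂ) τ := by
    have : (starRingEnd ℂ) ((starRingEnd ℂ) a * τ) = a * (starRingEnd ℂ) τ := by
      simp [map_mul]
    rw [← this]
    apply Complex.ext <;> simp [hcdef] <;> ring
  have h1 : a - (starRingEnd ℂ) a * τ ^ 2 = -c * τ := by
    rw [hcβ]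
    linear_combination (-a) * hτ1
  have hL : ((-2 * ((starRingEnd ℂ) a * τ).re : ℝ) : ℂ) + (starRingEnd ℂ) a * τ * 2 = c := by
    apply Complex.ext <;> simp [hcdef] <;> ring
  have hevmem : ∀ᶠ r : ℝ in 𝓝[Ico (0:ℝ) 1] 1, r ∈ Ico (0:ℝ) 1 := eventually_mem_nhdsWithin
  have habsr : ∀ r ∈ Ico (0:ℝ) 1, ‖(r:ℂ) * τ‖ = r := by
    intro r hr
    simp [norm_mul, hτ, _root_.abs_of_nonneg hr.1]
  have hmap : Tendsto (fun r : ℝ => (r:ℂ) * τ) (𝓝[Ico (0:ℝ) 1] 1) (𝓝[StolzAt τ 2] τ) := by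
    rw [tendsto_nhdsWithin_iff]
    constructor
    · have hcont : Continuous fun r : ℝ => (r:ℂ) * τ := by continuity
      exact (hcont.tendsto' 1 τ (by simp)).mono_left nhdsWithin_le_nhds
    · filter_upwards [hevmem] with r hr
      show ‖τ - (r:ℂ) * τ‖ < 2 * (1 - ‖(r:ℂ) * τ‖)
      have h2 : τ - (r:ℂ) * τ = ((1 - r : ℝ) : ℂ) * τ := by push_cast; ring
      rw [habsr r hr, h2, norm_mul, Complex.norm_real, hτ, mul_one, Real.norm_eq_abs,
        _root_.abs_of_nonneg (by linarith [hr.2] : (0:ℝ) ≤ 1 - r)]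
      linarith [hr.2]
  have htend0 : Tendsto (fun r : ℝ => f ((r:ℂ) * τ) / ((r:ℂ) * τ - τ)) (𝓝[Ico (0:ℝ) 1] 1)
      (𝓝 ((-2 * ((starRingEnd ℂ) a * τ).re : ℝ) : ℂ)) :=
    (hderiv 2 one_lt_two).comp hmap
  have halg : ∀ r ∈ Ico (0:ℝ) 1, f ((r:ℂ) * τ) / ((r:ℂ) * τ - τ)
      = -((starRingEnd ℂ) a * τ) * (1 + (r:ℂ)) + ((r:ℂ) * p ((r:ℂ) * τ) - c) / ((r:ℂ) - 1) := by
    intro r hr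
    have hz := mem_ball_aux hτ hr
    have hr1 : ((r:ℂ) - 1) ≠ 0 := sub_ne_zero.mpr (by exact_mod_cast ne_of_lt hr.2)
    have hden : (r:ℂ) * τ - τ ≠ 0 := by
      have : (r:ℂ) * τ - τ = ((r:ℂ) - 1) * τ := by ring
      rw [this]
      exact mul_ne_zero hr1 hτ0
    rw [hf _ hz]
    field_simp
    linear_combination h1
  have htendr : Tendsto (fun r : ℝ => ((r:ℂ))) (𝓝[Ico (0:ℝ) 1] 1) (𝓝 1) :=
    (Complex.continuous_ofReal.tendsto' 1 1 (by simp)).mono_left nhdsWithin_le_nhds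
  have htend1 : Tendsto (fun r : ℝ => ((r:ℂ) * p ((r:ℂ) * τ) - c) / ((r:ℂ) - 1))
      (𝓝[Ico (0:ℝ) 1] 1) (𝓝 c) := by
    have h2 : Tendsto (fun r : ℝ => f ((r:ℂ) * τ) / ((r:ℂ) * τ - τ)
        + ((starRingEnd ℂ) a * τ) * (1 + (r:ℂ))) (𝓝[Ico (0:ℝ) 1] 1)
        (𝓝 (((-2 * ((starRingEnd ℂ) a * τ).re : ℝ) : ℂ) + (starRingEnd ℂ) a * τ * 2)) := by
      have h3 : Tendsto (fun r : ℝ => ((starRingEnd ℂ) a * τ) * (1 + (r:ℂ)))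
          (𝓝[Ico (0:ℝ) 1] 1) (𝓝 ((starRingEnd ℂ) a * τ * 2)) := by
        have h4 := (tendsto_const_nhds (x := (starRingEnd ℂ) a * τ)).mul
          ((tendsto_const_nhds (x := (1:ℂ))).add htendr)
        have h5 : (starRingEnd ℂ) a * τ * (1 + 1) = (starRingEnd ℂ) a * τ * 2 := by norm_num
        rwa [h5] at h4
      exact htend0.add h3
    rw [hL] at h2
    refine h2.congr' ?_
    filter_upwards [hevmem] with r hr
    rw [halg r hr]
    ring
  have hrpos : ∀ᶠ r : ℝ in 𝓝[Ico (0:ℝ) 1] 1, (1/2 : ℝ) < r :=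
    (eventually_gt_nhds (by norm_num : (1/2:ℝ) < 1)).filter_mono nhdsWithin_le_nhds
  have hlim : Tendsto (fun r : ℝ => (p ((r:ℂ) * τ) - c) / ((r:ℂ) - 1))
      (𝓝[Ico (0:ℝ) 1] 1) (𝓝 0) := by
    have h3 : Tendsto (fun r : ℝ => (((r:ℂ) * p ((r:ℂ) * τ) - c) / ((r:ℂ) - 1) - c) / (r:ℂ))
        (𝓝[Ico (0:ℝ) 1] 1) (𝓝 0) := by
      have := (htend1.sub (tendsto_const_nhds (x := c))).div htendr one_ne_zero
      rw [sub_self, zero_div] at this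
      exact this
    refine h3.congr' ?_
    filter_upwards [hevmem, hrpos] with r hr hr2
    have hr0 : ((r:ℂ)) ≠ 0 := by
      exact_mod_cast (by linarith : r ≠ 0)
    have hr1 : ((r:ℂ) - 1) ≠ 0 := sub_ne_zero.mpr (by exact_mod_cast ne_of_lt hr.2)
    field_simp
    ring
  have hq0 := const_of_re_nonneg_of_radial (fun z => p z - c) τ hτ
    (hp.sub (differentiableOn_const c))
    (fun z hz => by
      have : c.re = 0 := by simp [hcdef]
      simp only [Complex.sub_re, this, sub_zero]
      exact hre z hz)
    hlim
  have hp_eq : ∀ z ∈ ball (0:ℂ) 1, p z = c := fun z hz => sub_eq_zero.mp (hq0 z hz)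
  refine ⟨hp_eq, fun z hz => ?_⟩
  rw [hf z hz, hp_eq z hz]
  ring
end

section
/- Let f and g be generators of one-parameter continuous semigroups {F_t}_{t≥0} and {G_s}_{s≥0} of holomorphic self-maps of the unit disk Δ. If f = α·g for some α ∈ ℂ and the semigroups are well-defined (i.e., both f and αg are generators), and g has an interior null point τ ∈ Δ, then the semigroups commute: F_t ∘ G_s = G_s ∘ F_t for all s,t ≥ 0. -/
open Complex Metric Filter Set Asymptotics Topology

/-- `F` is a one-parameter continuous semigroup of holomorphic self-maps of the
open unit disk generated by `f` (via the Cauchy problem `∂F_t/∂t + f∘F_t = 0`). -/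
def IsSemigroupGeneratedBy (F : ℝ → ℂ → ℂ) (f : ℂ → ℂ) : Prop :=
  (∀ z ∈ ball (0:ℂ) 1, F 0 z = z) ∧
  (∀ t : ℝ, 0 ≤ t → MapsTo (F t) (ball (0:ℂ) 1) (ball (0:ℂ) 1)) ∧
  (∀ t : ℝ, 0 ≤ t → DifferentiableOn ℂ (F t) (ball (0:ℂ) 1)) ∧
  (∀ t s : ℝ, 0 ≤ t → 0 ≤ s → ∀ z ∈ ball (0:ℂ) 1, F (t + s) z = F t (F s z)) ∧
  (∀ z ∈ ball (0:ℂ) 1, ∀ t : ℝ, 0 ≤ t → HasDerivAt (fun s => F s z) (-(f (F t z))) t)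

/-- Key semi-conjugation identity: the generator satisfies
`g (G s w) = (G s)'(w) * g w` on the disk. -/
lemma generator_semiconj {g : ℂ → ℂ} {G : ℝ → ℂ → ℂ}
    (hG : IsSemigroupGeneratedBy G g) {s : ℝ} (hs : 0 ≤ s)
    {w : ℂ} (hw : w ∈ ball (0:ℂ) 1) :
    g (G s w) = deriv (G s) w * g w := by
  obtain ⟨hG0, hGmap, hGdiff, hGsem, hGder⟩ := hG
  have hw' : G s w ∈ ball (0:ℂ) 1 := hGmap s hs hw
  -- derivative of r ↦ G r w at s
  have h1 : HasDerivAt (fun r => G r w) (-(g (G s w))) s := hGder w hw s hs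
  -- derivative of r ↦ G (r - s) w at s
  have h0 : HasDerivAt (fun r => G r w) (-(g w)) 0 := by
    have := hGder w hw 0 le_rfl
    rwa [hG0 w hw] at this
  have hin : HasDerivAt (fun r : ℝ => G (r - s) w) (-(g w)) s := by
    have hid : HasDerivAt (fun r : ℝ => r - s) 1 s := (hasDerivAt_id s).sub_const s
    have h0' : HasDerivAt (fun r => G r w) (-(g w)) (s - s) := by
      rw [sub_self]; exact h0
    have := HasDerivAt.scomp (h := fun r => r - s) s h0' hid
    rw [one_smul] at this
    exact this
  -- outer derivative
  have hout : HasDerivAt (G s) (deriv (G s) w) w :=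
    (((hGdiff s hs) w hw).differentiableAt (isOpen_ball.mem_nhds hw)).hasDerivAt
  have hout' : HasDerivAt (G s) (deriv (G s) w) (G (s - s) w) := by
    rw [sub_self, hG0 w hw]; exact hout
  have h2 : HasDerivAt (fun r : ℝ => G s (G (r - s) w))
      ((-(g w)) • deriv (G s) w) s := HasDerivAt.scomp s hout' hin
  -- the two functions agree on `Ici s`
  have heq : EqOn (fun r : ℝ => G s (G (r - s) w)) (fun r => G r w) (Ici s) := by
    intro r hr
    have h := hGsem s (r - s) hs (by simpa using (mem_Ici.mp hr)) w hw
    simp only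
    rw [← h, add_sub_cancel]
  have hd1 : HasDerivWithinAt (fun r => G r w) (-(g (G s w))) (Ici s) s :=
    h1.hasDerivWithinAt
  have hd2 : HasDerivWithinAt (fun r => G r w)
      ((-(g w)) • deriv (G s) w) (Ici s) s :=
    h2.hasDerivWithinAt.congr (fun r hr => (heq hr).symm) (heq self_mem_Ici).symm
  have e1 := hd1.derivWithin (uniqueDiffOn_Ici s s self_mem_Ici)
  have e2 := hd2.derivWithin (uniqueDiffOn_Ici s s self_mem_Ici)
  have h3 : -(g (G s w)) = (-(g w)) • deriv (G s) w := e1.symm.trans e2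
  rw [smul_eq_mul, neg_mul, neg_inj] at h3
  rw [h3, mul_comm]

theorem proportional_generators_interior_null_point_commute
    (f g : ℂ → ℂ) (α : ℂ) (F G : ℝ → ℂ → ℂ) (τ : ℂ)
    (hf : DifferentiableOn ℂ f (ball (0:ℂ) 1))
    (hg : DifferentiableOn ℂ g (ball (0:ℂ) 1))
    (hfg : ∀ z ∈ ball (0:ℂ) 1, f z = α * g z)
    (hF : IsSemigroupGeneratedBy F f)
    (hG : IsSemigroupGeneratedBy G g)
    (hτ : τ ∈ ball (0:ℂ) 1) (hgτ : g τ = 0) :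
    ∀ t s : ℝ, 0 ≤ t → 0 ≤ s → ∀ z ∈ ball (0:ℂ) 1, F t (G s z) = G s (F t z) := by
  intro t0 s ht0 hs z hz
  obtain ⟨hF0, hFmap, hFdiff, hFsem, hFder⟩ := hF
  obtain ⟨hG0, hGmap, hGdiff, hGsem, hGder⟩ := hG
  have hGsz : G s z ∈ ball (0:ℂ) 1 := hGmap s hs hz
  -- key identity for f
  have key : ∀ w ∈ ball (0:ℂ) 1, f (G s w) = deriv (G s) w * f w := by
    intro w hw
    have hw' : G s w ∈ ball (0:ℂ) 1 := hGmap s hs hw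
    rw [hfg _ hw', hfg _ hw,
      generator_semiconj ⟨hG0, hGmap, hGdiff, hGsem, hGder⟩ hs hw]
    ring
  -- the two trajectories
  set u : ℝ → ℂ := fun t => F t (G s z) with hu_def
  set v : ℝ → ℂ := fun t => G s (F t z) with hv_def
  have humem : ∀ t : ℝ, 0 ≤ t → u t ∈ ball (0:ℂ) 1 := fun t ht => hFmap t ht hGsz
  have hvmem : ∀ t : ℝ, 0 ≤ t → v t ∈ ball (0:ℂ) 1 :=
    fun t ht => hGmap s hs (hFmap t ht hz)
  have hu' : ∀ t : ℝ, 0 ≤ t → HasDerivAt u (-(f (u t))) t :=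
    fun t ht => hFder (G s z) hGsz t ht
  have hv' : ∀ t : ℝ, 0 ≤ t → HasDerivAt v (-(f (v t))) t := by
    intro t ht
    have hFt : F t z ∈ ball (0:ℂ) 1 := hFmap t ht hz
    have hout : HasDerivAt (G s) (deriv (G s) (F t z)) (F t z) :=
      (((hGdiff s hs) _ hFt).differentiableAt (isOpen_ball.mem_nhds hFt)).hasDerivAt
    have hin : HasDerivAt (fun r => F r z) (-(f (F t z))) t := hFder z hz t ht
    have h := HasDerivAt.scomp t hout hin
    have hval : (-(f (F t z))) • deriv (G s) (F t z) = -(f (v t)) := by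
      rw [hv_def]
      simp only
      rw [key _ hFt, smul_eq_mul]
      ring
    rw [hval] at h
    exact h
  -- continuity of trajectories
  have hucont : ContinuousOn u (Icc 0 t0) :=
    fun t ht => ((hu' t ht.1).continuousAt).continuousWithinAt
  have hvcont : ContinuousOn v (Icc 0 t0) :=
    fun t ht => ((hv' t ht.1).continuousAt).continuousWithinAt
  -- compact set containing both trajectories
  set K : Set ℂ := u '' Icc 0 t0 ∪ v '' Icc 0 t0 with hK_def
  have hKcomp : IsCompact K :=
    (isCompact_Icc.image_of_continuousOn hucont).union
      (isCompact_Icc.image_of_continuousOn hvcont)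
  have hKball : K ⊆ ball (0:ℂ) 1 := by
    rintro x (⟨t, ht, rfl⟩ | ⟨t, ht, rfl⟩)
    · exact humem t ht.1
    · exact hvmem t ht.1
  have hKne : K.Nonempty := ⟨u 0, Or.inl ⟨0, ⟨le_rfl, ht0⟩, rfl⟩⟩
  obtain ⟨x0, hx0K, hmax⟩ := hKcomp.exists_isMaxOn hKne continuous_norm.continuousOn
  set r : ℝ := ‖x0‖ with hr_def
  have hr0 : 0 ≤ r := norm_nonneg _
  have hr1 : r < 1 := by
    have := hKball hx0K
    rwa [mem_ball_zero_iff] at this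
  have hKr : K ⊆ closedBall (0:ℂ) r :=
    fun x hx => mem_closedBall_zero_iff.2 (hmax hx)
  have hrball : closedBall (0:ℂ) r ⊆ ball (0:ℂ) 1 := closedBall_subset_ball hr1
  -- Lipschitz bound for f on the closed ball
  have hder_cont : ContinuousOn (deriv f) (ball (0:ℂ) 1) :=
    ((hf.analyticOnNhd isOpen_ball).deriv).continuousOn
  obtain ⟨y0, hy0, hmaxd⟩ := (isCompact_closedBall (0:ℂ) r).exists_isMaxOn
    ⟨0, mem_closedBall_self hr0⟩ ((hder_cont.mono hrball).norm)
  set C : NNReal := ‖deriv f y0‖₊ with hC_def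
  have hlip : LipschitzOnWith C f (closedBall (0:ℂ) r) := by
    refine (convex_closedBall (0:ℂ) r).lipschitzOnWith_of_nnnorm_deriv_le
      (fun x hx => hf.differentiableAt (isOpen_ball.mem_nhds (hrball hx)))
      (fun x hx => ?_)
    have := hmaxd hx
    exact_mod_cast this
  have hlipneg : LipschitzOnWith C (fun x => -(f x)) (closedBall (0:ℂ) r) :=
    fun x hx y hy => by simpa [edist_neg_neg] using hlip hx hy
  -- uniqueness of solutions of the ODE
  have huniq : EqOn u v (Icc 0 t0) := by
    refine ODE_solution_unique_of_mem_Icc_right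
      (v := fun _ x => -(f x)) (s := fun _ => closedBall (0:ℂ) r)
      (fun _ _ => hlipneg) hucont
      (fun t ht => (hu' t ht.1).hasDerivWithinAt)
      (fun t ht => hKr (Or.inl ⟨t, ⟨ht.1, ht.2.le⟩, rfl⟩)) hvcont
      (fun t ht => (hv' t ht.1).hasDerivWithinAt)
      (fun t ht => hKr (Or.inr ⟨t, ⟨ht.1, ht.2.le⟩, rfl⟩)) ?_
    -- initial condition
    show u 0 = v 0
    rw [hu_def, hv_def]
    simp only
    rw [hF0 _ hGsz, hF0 _ hz]
  exact huniq ⟨ht0, le_rfl⟩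
end

section
/- Let f, g generate commuting one-parameter continuous semigroups {F_t} and {G_s} of holomorphic self-maps of the unit disk Δ (F_t∘G_s = G_s∘F_t for all s,t ≥ 0), and suppose f has a zero at τ ∈ Δ (interior point). Then G_s(τ) = τ for all s ≥ 0, and hence g(τ) = 0. -/
open Complex Metric Filter Set Asymptotics Topology

/-- If the trajectory of `w` is constant, then the generator vanishes at `w`. -/
lemma null_of_fixed_aux (f : ℂ → ℂ) (F : ℝ → ℂ → ℂ) (w : ℂ)
    (hode : ∀ z ∈ ball (0:ℂ) 1, ∀ t : ℝ, 0 ≤ t → HasDerivAt (fun s => F s z) (-(f (F t z))) t)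
    (hw : w ∈ ball (0:ℂ) 1) (hfix : ∀ t : ℝ, 0 ≤ t → F t w = w) : f w = 0 := by
  have h1 : HasDerivAt (fun s => F s w) (-(f (F 1 w))) 1 := hode w hw 1 zero_le_one
  have heq : (fun _ : ℝ => w) =ᶠ[𝓝 (1:ℝ)] fun s => F s w := by
    filter_upwards [Ioo_mem_nhds (by norm_num : (0:ℝ) < 1) (by norm_num : (1:ℝ) < 2)] with s hs
    exact (hfix s hs.1.le).symm
  have h2 : HasDerivAt (fun _ : ℝ => w) (-(f (F 1 w))) 1 := h1.congr_of_eventuallyEq heq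
  have h3 := h2.unique (hasDerivAt_const 1 w)
  rw [hfix 1 zero_le_one] at h3
  simpa [neg_eq_zero] using h3

/-- A zero of the generator is a fixed point of the semigroup (ODE uniqueness). -/
lemma fixed_of_null_aux (f : ℂ → ℂ) (F : ℝ → ℂ → ℂ) (τ : ℂ)
    (hf : DifferentiableOn ℂ f (ball (0:ℂ) 1))
    (hF : IsSemigroupGeneratedBy F f)
    (hτ : τ ∈ ball (0:ℂ) 1) (hfτ : f τ = 0) :
    ∀ t : ℝ, 0 ≤ t → F t τ = τ := by
  obtain ⟨hF0, hFmap, hFdiff, hFsem, hFode⟩ := hF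
  -- continuity of the trajectory
  have hc : ∀ t : ℝ, 0 ≤ t → ContinuousAt (fun s => F s τ) t :=
    fun t ht => (hFode τ hτ t ht).continuousAt
  -- f is Lipschitz on a small closed ball around τ
  have hAn : AnalyticOnNhd ℂ f (ball (0:ℂ) 1) := hf.analyticOnNhd isOpen_ball
  have hCD : ContDiffAt ℝ 1 f τ :=
    ((hAn τ hτ).contDiffAt.of_le le_top).restrict_scalars ℝ
  obtain ⟨K, U, hU, hlipU⟩ := hCD.exists_lipschitzOnWith
  obtain ⟨r, hr, hrsub⟩ := (nhds_basis_closedBall.mem_iff).mp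
    (Filter.inter_mem hU (isOpen_ball.mem_nhds hτ))
  have hlip : LipschitzOnWith K (fun z => -(f z)) (closedBall τ r) := by
    rw [show K = 1 * K by rw [one_mul]]
    exact LipschitzWith.id.neg.comp_lipschitzOnWith
      (hlipU.mono (fun z hz => (hrsub hz).1))
  -- local propagation of the fixed point
  have key : ∀ t₀ : ℝ, 0 ≤ t₀ → F t₀ τ = τ →
      ∃ ε > 0, ∀ t : ℝ, 0 ≤ t → |t - t₀| < ε → F t τ = τ := by
    intro t₀ ht₀ hfix
    have hcb : closedBall τ r ∈ 𝓝 (F t₀ τ) := by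
      rw [hfix]; exact closedBall_mem_nhds τ hr
    obtain ⟨ε, hε, hball⟩ := Metric.eventually_nhds_iff.mp
      ((hc t₀ ht₀).eventually_mem hcb)
    refine ⟨ε, hε, fun t ht htε => ?_⟩
    rcases le_or_gt t₀ t with hle | hlt
    · -- forward uniqueness on [t₀, t]
      have habs : ∀ u ∈ Icc t₀ t, F u τ ∈ closedBall τ r := by
        intro u hu
        refine hball ?_
        rw [Real.dist_eq, _root_.abs_of_nonneg (sub_nonneg.mpr hu.1)]
        calc u - t₀ ≤ t - t₀ := by linarith [hu.2]
          _ = |t - t₀| := (_root_.abs_of_nonneg (sub_nonneg.mpr hle)).symm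
          _ < ε := htε
      have := ODE_solution_unique_of_mem_Icc_right
        (v := fun _ z => -(f z)) (s := fun _ => closedBall τ r) (K := K)
        (fun _ _ => hlip)
        (f := fun u => F u τ) (g := fun _ => τ) (a := t₀) (b := t)
        (fun u hu => (hc u (le_trans ht₀ hu.1)).continuousWithinAt)
        (fun u hu => (hFode τ hτ u (le_trans ht₀ hu.1)).hasDerivWithinAt)
        (fun u hu => habs u ⟨hu.1, hu.2.le⟩)
        continuousOn_const
        (fun u _ => by
          simpa [hfτ] using (hasDerivWithinAt_const u (Ici u) τ))
        (fun _ _ => mem_closedBall_self hr.le)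
        hfix
      exact this (right_mem_Icc.mpr hle)
    · -- backward uniqueness on [t, t₀]
      have habs : ∀ u ∈ Icc t t₀, F u τ ∈ closedBall τ r := by
        intro u hu
        refine hball ?_
        rw [Real.dist_eq, abs_sub_comm, _root_.abs_of_nonneg (sub_nonneg.mpr hu.2)]
        calc t₀ - u ≤ t₀ - t := by linarith [hu.1]
          _ = |t - t₀| := by rw [abs_sub_comm, _root_.abs_of_nonneg (sub_nonneg.mpr hlt.le)]
          _ < ε := htε
      have := ODE_solution_unique_of_mem_Icc_left
        (v := fun _ z => -(f z)) (s := fun _ => closedBall τ r) (K := K)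
        (fun _ _ => hlip)
        (f := fun u => F u τ) (g := fun _ => τ) (a := t) (b := t₀)
        (fun u hu => (hc u (le_trans ht hu.1)).continuousWithinAt)
        (fun u hu => (hFode τ hτ u (le_trans ht hu.1.le)).hasDerivWithinAt)
        (fun u hu => habs u ⟨hu.1.le, hu.2⟩)
        continuousOn_const
        (fun u _ => by
          simpa [hfτ] using (hasDerivWithinAt_const u (Iic u) τ))
        (fun _ _ => mem_closedBall_self hr.le)
        hfix
      exact this (left_mem_Icc.mpr hlt.le)
  -- clopen argument on Ici 0
  haveI : PreconnectedSpace (Ici (0:ℝ)) := Subtype.preconnectedSpace isPreconnected_Ici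
  have hcont : Continuous ((Ici (0:ℝ)).restrict (fun t => F t τ)) :=
    ContinuousOn.restrict (fun t ht => (hc t ht).continuousWithinAt)
  set S : Set (Ici (0:ℝ)) := (Ici (0:ℝ)).restrict (fun t => F t τ) ⁻¹' {τ} with hS
  have hclosed : IsClosed S := isClosed_singleton.preimage hcont
  have hopen : IsOpen S := by
    rw [Metric.isOpen_iff]
    intro t ht
    obtain ⟨ε, hε, hloc⟩ := key t.1 t.2 ht
    refine ⟨ε, hε, fun u hu => ?_⟩
    have : |u.1 - t.1| < ε := by
      simpa [Subtype.dist_eq, Real.dist_eq] using hu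
    exact hloc u.1 u.2 this
  have hne : S ≠ ∅ := by
    intro h
    have : (⟨0, Set.self_mem_Ici⟩ : Ici (0:ℝ)) ∈ S := hF0 τ hτ
    simp [h] at this
  have huniv : S = univ := (isClopen_iff.mp ⟨hclosed, hopen⟩).resolve_left hne
  intro t ht
  have : (⟨t, ht⟩ : Ici (0:ℝ)) ∈ S := huniv ▸ mem_univ _
  exact this

theorem commuting_semigroups_share_interior_null_point
    (f g : ℂ → ℂ) (F G : ℝ → ℂ → ℂ) (τ : ℂ)
    (hf : DifferentiableOn ℂ f (ball (0:ℂ) 1))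
    (hg : DifferentiableOn ℂ g (ball (0:ℂ) 1))
    (hF : IsSemigroupGeneratedBy F f)
    (hG : IsSemigroupGeneratedBy G g)
    (hcomm : ∀ t s : ℝ, 0 ≤ t → 0 ≤ s → ∀ z ∈ ball (0:ℂ) 1, F t (G s z) = G s (F t z))
    (hτ : τ ∈ ball (0:ℂ) 1) (hfτ : f τ = 0)
    (hfne : ∃ z ∈ ball (0:ℂ) 1, f z ≠ 0) :
    (∀ s : ℝ, 0 ≤ s → G s τ = τ) ∧ g τ = 0 := by
  -- τ is fixed by F
  have hFfix : ∀ t : ℝ, 0 ≤ t → F t τ = τ := fixed_of_null_aux f F τ hf hF hτ hfτ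
  obtain ⟨hF0, hFmap, hFdiff, hFsem, hFode⟩ := hF
  obtain ⟨hG0, hGmap, hGdiff, hGsem, hGode⟩ := hG
  -- f vanishes along the G-trajectory of τ
  have hfG : ∀ s : ℝ, 0 ≤ s → f (G s τ) = 0 := by
    intro s hs
    have hw : G s τ ∈ ball (0:ℂ) 1 := hGmap s hs hτ
    refine null_of_fixed_aux f F (G s τ) hFode hw (fun t ht => ?_)
    rw [hcomm t s ht hs τ hτ, hFfix t ht]
  -- zeros of f are isolated at τ
  have hAn : AnalyticOnNhd ℂ f (ball (0:ℂ) 1) := hf.analyticOnNhd isOpen_ball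
  have hiso : ∀ᶠ z in 𝓝[≠] τ, f z ≠ 0 := by
    rcases (hAn τ hτ).eventually_eq_zero_or_eventually_ne_zero with h | h
    · exfalso
      obtain ⟨z, hz, hfz⟩ := hfne
      exact hfz (hAn.eqOn_zero_of_preconnected_of_eventuallyEq_zero
        (convex_ball (0:ℂ) 1).isPreconnected hτ h hz)
    · exact h
  have hiso' : ∀ᶠ z in 𝓝 τ, f z = 0 → z = τ := by
    rw [eventually_nhdsWithin_iff] at hiso
    filter_upwards [hiso] with z hz hfz
    by_contra hne
    exact hz hne hfz
  obtain ⟨δ, hδ, hδiso⟩ := Metric.eventually_nhds_iff.mp hiso'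
  -- continuity of s ↦ G s τ
  have hc : ∀ s : ℝ, 0 ≤ s → ContinuousAt (fun u => G u τ) s :=
    fun s hs => (hGode τ hτ s hs).continuousAt
  -- clopen argument for the G-trajectory
  haveI : PreconnectedSpace (Ici (0:ℝ)) := Subtype.preconnectedSpace isPreconnected_Ici
  have hcont : Continuous ((Ici (0:ℝ)).restrict (fun s => G s τ)) :=
    ContinuousOn.restrict (fun s hs => (hc s hs).continuousWithinAt)
  set S : Set (Ici (0:ℝ)) := (Ici (0:ℝ)).restrict (fun s => G s τ) ⁻¹' {τ} with hSdef
  have hclosed : IsClosed S := isClosed_singleton.preimage hcont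
  have hopen : IsOpen S := by
    rw [Metric.isOpen_iff]
    intro s hsS
    have hballδ : ∀ᶠ u in 𝓝 s.1, dist (G u τ) τ < δ := by
      have : ContinuousAt (fun u => G u τ) s.1 := hc s.1 s.2
      have hGs : G s.1 τ = τ := hsS
      have := this.eventually_mem (x := s.1)
        (show Metric.ball τ δ ∈ 𝓝 (G s.1 τ) by rw [hGs]; exact ball_mem_nhds τ hδ)
      simpa [Metric.mem_ball] using this
    obtain ⟨ε, hε, hloc⟩ := Metric.eventually_nhds_iff.mp hballδ
    refine ⟨ε, hε, fun u hu => ?_⟩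
    have hd : dist u.1 s.1 < ε := by simpa [Subtype.dist_eq] using hu
    exact hδiso (hloc hd) (hfG u.1 u.2)
  have hne : S ≠ ∅ := by
    intro h
    have : (⟨0, Set.self_mem_Ici⟩ : Ici (0:ℝ)) ∈ S := hG0 τ hτ
    simp [h] at this
  have huniv : S = univ := (isClopen_iff.mp ⟨hclosed, hopen⟩).resolve_left hne
  have hGfix : ∀ s : ℝ, 0 ≤ s → G s τ = τ := by
    intro s hs
    have : (⟨s, hs⟩ : Ici (0:ℝ)) ∈ S := huniv ▸ mem_univ _
    exact this
  exact ⟨hGfix, null_of_fixed_aux g G τ hGode hτ hGfix⟩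
end
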